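/- arXiv:2206.02123 — 4 statements merged into one kernel-verified Lean document; each statement's English description precedes it below -/
import Mathlib

section
/- Let A be the unit cube [0,1]ⁿ in ℝⁿ (n ≥ 2) and let u, v ∈ Sⁿ⁻¹. Then |A| · V(A[n-2],[0,u],[0,v]) ≤ (n/(n-1)) · V(A[n-1],[0,u]) · V(A[n-1],[0,v]), where V denotes mixed volume and A[k] means A repeated k times. -/
open MeasureTheory Set Pointwise
open scoped ENNReal

def ZS (n : ℕ) (u : Fin n → ℝ) : Set (Fin n → ℝ) :=
  {x | ∃ t ∈ Set.Icc (0:ℝ) 1, ∀ i, x i - t * u i ∈ Set.Icc (0:ℝ) 1}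

def ZS2 (n : ℕ) (u v : Fin n → ℝ) : Set (Fin n → ℝ) :=
  {x | ∃ s ∈ Set.Icc (0:ℝ) 1, ∃ t ∈ Set.Icc (0:ℝ) 1,
    ∀ i, x i - s * u i - t * v i ∈ Set.Icc (0:ℝ) 1}

lemma isCompact_ZS2 (n : ℕ) (u v : Fin n → ℝ) : IsCompact (ZS2 n u v) := by
  have h : ZS2 n u v = (fun p : ℝ × ℝ × (Fin n → ℝ) => p.2.2 + p.1 • u + p.2.1 • v) ''
      ((Set.Icc (0:ℝ) 1) ×ˢ (Set.Icc (0:ℝ) 1) ×ˢ (Set.pi Set.univ fun _ => Set.Icc (0:ℝ) 1)) := by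
    ext x
    constructor
    · rintro ⟨s, hs, t, ht, hx⟩
      exact ⟨⟨s, t, fun i => x i - s * u i - t * v i⟩, ⟨hs, ht, fun i _ => hx i⟩, by
        funext i; simp [Pi.add_apply]; ring⟩
    · rintro ⟨⟨s, t, q⟩, ⟨hs, ht, hq⟩, rfl⟩
      refine ⟨s, hs, t, ht, fun i => ?_⟩
      have := hq i (Set.mem_univ i)
      simp only [Set.mem_Icc] at this ⊢
      constructor <;> [skip; skip] <;> simp [Pi.add_apply] <;> linarith [this.1, this.2]
  rw [h]
  exact ((isCompact_Icc.prod (isCompact_Icc.prod (isCompact_univ_pi fun _ => isCompact_Icc)))).image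
    (by fun_prop)

lemma isCompact_ZS (n : ℕ) (u : Fin n → ℝ) : IsCompact (ZS n u) := by
  have h : ZS n u = ZS2 n u 0 := by
    ext x
    constructor
    · rintro ⟨t, ht, hx⟩; exact ⟨t, ht, 0, ⟨le_refl 0, zero_le_one⟩, fun i => by simpa using hx i⟩
    · rintro ⟨s, hs, t, ht, hx⟩; exact ⟨s, hs, fun i => by simpa using hx i⟩
  rw [h]; exact isCompact_ZS2 n u 0


lemma affine_mem_Icc {c y t1 t2 t : ℝ} (h1 : t1 ≤ t) (h2 : t ≤ t2)
    (m1 : y - t1 * c ∈ Set.Icc (0:ℝ) 1) (m2 : y - t2 * c ∈ Set.Icc (0:ℝ) 1) :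
    y - t * c ∈ Set.Icc (0:ℝ) 1 := by
  simp only [Set.mem_Icc] at *
  rcases le_total 0 c with hc | hc
  · exact ⟨by nlinarith [mul_le_mul_of_nonneg_right h2 hc],
      by nlinarith [mul_le_mul_of_nonneg_right h1 hc]⟩
  · exact ⟨by nlinarith [mul_le_mul_of_nonpos_right h1 hc],
      by nlinarith [mul_le_mul_of_nonpos_right h2 hc]⟩

lemma volume_ZS (n : ℕ) (u : Fin n → ℝ) :
    volume (ZS n u) = ENNReal.ofReal (1 + ∑ i, |u i|) := by
  induction n with
  | zero =>
    have h : ZS 0 u = Set.univ := by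
      ext x
      simp only [ZS, Set.mem_setOf_eq, Set.mem_univ, iff_true]
      exact ⟨0, ⟨le_refl _, zero_le_one⟩, fun i => i.elim0⟩
    rw [h]
    simp [MeasureTheory.volume_pi, Measure.pi_univ]
  | succ n ih =>
    set c := u (Fin.last n) with hc
    set u' : Fin n → ℝ := fun j => u j.castSucc with hu'
    have hmp := MeasureTheory.volume_preserving_piFinSuccAbove
      (fun _ : Fin (n+1) => ℝ) (Fin.last n)
    set e := MeasurableEquiv.piFinSuccAbove (fun _ : Fin (n+1) => ℝ) (Fin.last n) with he
    set S : Set (ℝ × (Fin n → ℝ)) :=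
      {p | ∃ t ∈ Set.Icc (0:ℝ) 1, (∀ j, p.2 j - t * u' j ∈ Set.Icc (0:ℝ) 1) ∧
        p.1 - t * c ∈ Set.Icc (0:ℝ) 1} with hS
    -- image of ZS under e is S
    have himg : e '' (ZS (n+1) u) = S := by
      rw [MeasurableEquiv.image_eq_preimage_symm]
      ext p
      simp only [Set.mem_preimage, hS, Set.mem_setOf_eq, ZS]
      have hsymm0 : e.symm p = Fin.snoc p.2 p.1 := by
        simp [he, MeasurableEquiv.piFinSuccAbove, Fin.snocEquiv]
      have hsymm : ∀ i, (e.symm p) i = (Fin.snoc p.2 p.1 : Fin (n+1) → ℝ) i := fun i =>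
        congrFun hsymm0 i
      constructor
      · rintro ⟨t, ht, hall⟩
        refine ⟨t, ht, fun j => ?_, ?_⟩
        · have := hall ((Fin.last n).succAbove j)
          rw [Fin.succAbove_last] at this
          rwa [hsymm, Fin.snoc_castSucc] at this
        · have := hall (Fin.last n)
          rwa [hsymm, Fin.snoc_last] at this
      · rintro ⟨t, ht, hrest, hlast⟩
        refine ⟨t, ht, ?_⟩
        rw [Fin.forall_iff_succAbove (Fin.last n)]
        constructor
        · rwa [hsymm, Fin.snoc_last]
        · intro j
          rw [Fin.succAbove_last, hsymm, Fin.snoc_castSucc]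
          exact hrest j
    have hZmeas : MeasurableSet (ZS (n+1) u) := (isCompact_ZS _ u).isClosed.measurableSet
    have hSmeas : MeasurableSet S := by
      rw [← himg, MeasurableEquiv.image_eq_preimage_symm]
      exact e.symm.measurable hZmeas
    have hpre : e ⁻¹' S = ZS (n+1) u := by
      rw [← himg]; exact Set.preimage_image_eq _ e.injective
    have hvol : volume (ZS (n+1) u) = volume S := by
      rw [← hpre, ← MeasurableEquiv.map_apply, hmp.map_eq]
    set T : (Fin n → ℝ) → Set ℝ :=
      fun y => {t | t ∈ Icc (0:ℝ) 1 ∧ ∀ j, y j - t * u' j ∈ Icc (0:ℝ) 1} with hT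
    set TT : Set ((Fin n → ℝ) × ℝ) :=
      {q | q.2 ∈ Icc (0:ℝ) 1 ∧ ∀ j, q.1 j - q.2 * u' j ∈ Icc (0:ℝ) 1} with hTT
    have hTTmeas : MeasurableSet TT := by
      have hTTeq : TT = (Prod.snd ⁻¹' Icc (0:ℝ) 1) ∩
          ⋂ j, ((fun q : (Fin n → ℝ) × ℝ => q.1 j - q.2 * u' j) ⁻¹' Icc (0:ℝ) 1) := by
        ext q; simp [hTT, Set.mem_iInter]
      rw [hTTeq]
      exact ((isClosed_Icc.preimage continuous_snd).inter (isClosed_iInter fun j =>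
        isClosed_Icc.preimage (by fun_prop))).measurableSet
    have hZSn : MeasurableSet (ZS n u') := (isCompact_ZS _ u').isClosed.measurableSet
    have key : ∀ y : Fin n → ℝ, volume ((fun z => (z, y)) ⁻¹' S)
        = (ZS n u').indicator (fun _ => (1:ℝ≥0∞)) y + ENNReal.ofReal (|c|) * volume (T y) := by
      intro y
      by_cases hne : (T y).Nonempty
      · have hTclosed : IsClosed (T y) := by
          have hTeq : T y = Icc (0:ℝ) 1 ∩
              ⋂ j, ((fun t => y j - t * u' j) ⁻¹' Icc (0:ℝ) 1) := by
            ext t; simp [hT, Set.mem_iInter]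
          rw [hTeq]
          exact isClosed_Icc.inter (isClosed_iInter fun j => isClosed_Icc.preimage (by fun_prop))
        have hTcomp : IsCompact (T y) :=
          isCompact_Icc.of_isClosed_subset hTclosed (fun t ht => ht.1)
        set a := sInf (T y) with ha'
        set b := sSup (T y) with hb'
        have haT : a ∈ T y := hTcomp.sInf_mem hne
        have hbT : b ∈ T y := hTcomp.sSup_mem hne
        have hab : a ≤ b := csInf_le_csSup hne hTcomp.bddBelow hTcomp.bddAbove
        have hTicc : T y = Icc a b := by
          apply Set.Subset.antisymm
          · exact fun t ht => ⟨csInf_le hTcomp.bddBelow ht, le_csSup hTcomp.bddAbove ht⟩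
          · rintro t ⟨h1, h2⟩
            exact ⟨⟨le_trans haT.1.1 h1, le_trans h2 hbT.1.2⟩,
              fun j => affine_mem_Icc h1 h2 (haT.2 j) (hbT.2 j)⟩
        have hsec : (fun z => (z, y)) ⁻¹' S = Icc (min (a*c) (b*c)) (max (a*c) (b*c) + 1) := by
          ext z
          simp only [Set.mem_preimage, hS, Set.mem_setOf_eq, Set.mem_Icc]
          constructor
          · rintro ⟨t, ht, hyj, hz⟩
            have htT : t ∈ Icc a b := by rw [← hTicc]; exact ⟨ht, hyj⟩
            have h1 : min (a*c) (b*c) ≤ t*c ∧ t*c ≤ max (a*c) (b*c) := by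
              rcases le_total 0 c with hcpos | hcneg
              · exact ⟨le_trans (min_le_left _ _) (mul_le_mul_of_nonneg_right htT.1 hcpos),
                  le_trans (mul_le_mul_of_nonneg_right htT.2 hcpos) (le_max_right _ _)⟩
              · exact ⟨le_trans (min_le_right _ _) (mul_le_mul_of_nonpos_right htT.2 hcneg),
                  le_trans (mul_le_mul_of_nonpos_right htT.1 hcneg) (le_max_left _ _)⟩
            exact ⟨by linarith [hz.1, h1.1], by linarith [hz.2, h1.2]⟩
          · rintro ⟨hz1, hz2⟩
            rcases le_total 0 c with hcpos | hcneg
            · have hm : min (a*c) (b*c) = a*c :=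
                min_eq_left (mul_le_mul_of_nonneg_right hab hcpos)
              have hM : max (a*c) (b*c) = b*c :=
                max_eq_right (mul_le_mul_of_nonneg_right hab hcpos)
              rw [hm] at hz1
              rw [hM] at hz2
              by_cases hz3 : z ≤ a*c + 1
              · exact ⟨a, haT.1, haT.2, by constructor <;> linarith⟩
              · push_neg at hz3
                have hcpos' : 0 < c := by
                  rcases eq_or_lt_of_le hcpos with h | h
                  · exfalso; rw [← h] at hz2 hz3; simp at hz2 hz3; linarith
                  · exact h
                have htmem : (z-1)/c ∈ Icc a b := by
                  constructor
                  · rw [le_div_iff₀ hcpos']; linarith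
                  · rw [div_le_iff₀ hcpos']; linarith
                have htT : (z-1)/c ∈ T y := by rw [hTicc]; exact htmem
                refine ⟨(z-1)/c, htT.1, htT.2, ?_⟩
                rw [div_mul_cancel₀ _ (ne_of_gt hcpos')]
                constructor <;> linarith
            · have hm : min (a*c) (b*c) = b*c :=
                min_eq_right (mul_le_mul_of_nonpos_right hab hcneg)
              have hM : max (a*c) (b*c) = a*c :=
                max_eq_left (mul_le_mul_of_nonpos_right hab hcneg)
              rw [hm] at hz1
              rw [hM] at hz2
              by_cases hz3 : z ≤ b*c + 1
              · exact ⟨b, hbT.1, hbT.2, by constructor <;> linarith⟩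
              · push_neg at hz3
                have hcneg' : c < 0 := by
                  rcases eq_or_lt_of_le hcneg with h | h
                  · exfalso; rw [h] at hz2 hz3; simp at hz2 hz3; linarith
                  · exact h
                have htmem : (z-1)/c ∈ Icc a b := by
                  constructor
                  · rw [le_div_iff_of_neg hcneg']; linarith
                  · rw [div_le_iff_of_neg hcneg']; linarith
                have htT : (z-1)/c ∈ T y := by rw [hTicc]; exact htmem
                refine ⟨(z-1)/c, htT.1, htT.2, ?_⟩
                rw [div_mul_cancel₀ _ (ne_of_lt hcneg')]
                constructor <;> linarith
        rw [hsec, Real.volume_Icc, hTicc, Real.volume_Icc]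
        have hyZS : y ∈ ZS n u' := by obtain ⟨t, ht⟩ := hne; exact ⟨t, ht.1, ht.2⟩
        rw [Set.indicator_of_mem hyZS]
        have hMm : max (a*c) (b*c) + 1 - min (a*c) (b*c) = 1 + |c| * (b - a) := by
          rcases le_total 0 c with hcpos | hcneg
          · rw [max_eq_right (mul_le_mul_of_nonneg_right hab hcpos),
              min_eq_left (mul_le_mul_of_nonneg_right hab hcpos), abs_of_nonneg hcpos]; ring
          · rw [max_eq_left (mul_le_mul_of_nonpos_right hab hcneg),
              min_eq_right (mul_le_mul_of_nonpos_right hab hcneg), abs_of_nonpos hcneg]; ring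
        rw [hMm, ENNReal.ofReal_add zero_le_one
          (mul_nonneg (abs_nonneg c) (sub_nonneg.2 hab)), ENNReal.ofReal_one,
          ENNReal.ofReal_mul (abs_nonneg c)]
      · have hTempty : T y = ∅ := Set.not_nonempty_iff_eq_empty.mp hne
        have hyn : y ∉ ZS n u' := by
          rintro ⟨t, ht1, ht2⟩; exact hne ⟨t, ht1, ht2⟩
        have hsec : (fun z => (z, y)) ⁻¹' S = ∅ := by
          ext z
          simp only [Set.mem_preimage, hS, Set.mem_setOf_eq, Set.mem_empty_iff_false, iff_false]
          rintro ⟨t, ht, hyj, hz⟩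
          have : t ∈ T y := ⟨ht, hyj⟩
          rw [hTempty] at this
          exact this
        rw [hsec, hTempty, Set.indicator_of_notMem hyn]
        simp
    have hmeasT : Measurable fun y => volume (T y) :=
      measurable_measure_prodMk_left hTTmeas
    have hTint : ∫⁻ y, volume (T y) ∂volume = 1 := by
      have h1 : ∫⁻ y, volume (T y) ∂volume = ((volume : Measure (Fin n → ℝ)).prod volume) TT :=
        (Measure.prod_apply hTTmeas).symm
      rw [h1, Measure.prod_apply_symm hTTmeas]
      have h2 : ∀ t : ℝ, volume ((fun y : Fin n → ℝ => (y, t)) ⁻¹' TT)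
          = (Icc (0:ℝ) 1).indicator (fun _ => (1:ℝ≥0∞)) t := by
        intro t
        by_cases htI : t ∈ Icc (0:ℝ) 1
        · have hset : (fun y : Fin n → ℝ => (y, t)) ⁻¹' TT
              = Set.pi Set.univ (fun j => Icc (t * u' j) (t * u' j + 1)) := by
            ext y
            obtain ⟨ht0, ht1⟩ := id htI
            simp only [Set.mem_preimage, hTT, Set.mem_setOf_eq, Set.mem_pi, Set.mem_univ,
              forall_true_left, Set.mem_Icc, ht0, ht1, and_self, true_and]
            exact forall_congr' fun j =>
              ⟨fun ⟨p1, p2⟩ => ⟨by linarith, by linarith⟩,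
               fun ⟨p1, p2⟩ => ⟨by linarith, by linarith⟩⟩
          rw [hset, volume_pi_pi, Set.indicator_of_mem htI]
          simp [Real.volume_Icc]
        · have hset : (fun y : Fin n → ℝ => (y, t)) ⁻¹' TT = ∅ := by
            ext y
            simp only [Set.mem_preimage, hTT, Set.mem_setOf_eq, Set.mem_empty_iff_false, iff_false]
            rintro ⟨h1', h2'⟩; exact htI h1'
          rw [hset, Set.indicator_of_notMem htI]; simp
      rw [lintegral_congr h2, lintegral_indicator_const measurableSet_Icc, Real.volume_Icc]
      simp
    rw [hvol, Measure.volume_eq_prod, Measure.prod_apply_symm hSmeas, lintegral_congr key,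
      lintegral_add_left (measurable_const.indicator hZSn),
      lintegral_indicator_const hZSn, one_mul, lintegral_const_mul _ hmeasT, hTint, mul_one,
      ih u']
    rw [← ENNReal.ofReal_add (by positivity) (abs_nonneg c)]
    congr 1
    rw [Fin.sum_univ_castSucc]
    simp only [hu', hc]
    ring


lemma combo_mem {θ A B : ℝ} (h0 : 0 ≤ θ) (h1 : θ ≤ 1)
    (hA : A ∈ Set.Icc (0:ℝ) 1) (hB : B ∈ Set.Icc (0:ℝ) 1) :
    θ*A + (1-θ)*B ∈ Set.Icc (0:ℝ) 1 := by
  obtain ⟨hA0, hA1⟩ := hA; obtain ⟨hB0, hB1⟩ := hB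
  constructor <;> nlinarith

/-- the `s`-projection of the parameter region -/
def PS (n : ℕ) (α β y : Fin n → ℝ) : Set ℝ :=
  {s | s ∈ Set.Icc (0:ℝ) 1 ∧ ∃ t ∈ Set.Icc (0:ℝ) 1,
    ∀ j, y j - s * α j - t * β j ∈ Set.Icc (0:ℝ) 1}

lemma PS_between {n : ℕ} {α β y : Fin n → ℝ} {s1 s2 s : ℝ}
    (h1 : s1 ∈ PS n α β y) (h2 : s2 ∈ PS n α β y) (hle1 : s1 ≤ s) (hle2 : s ≤ s2) :
    s ∈ PS n α β y := by
  obtain ⟨hs1I, t1, ht1I, hc1⟩ := h1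
  obtain ⟨hs2I, t2, ht2I, hc2⟩ := h2
  rcases eq_or_lt_of_le (hle1.trans hle2) with heq | hlt
  · have : s = s1 := le_antisymm (heq ▸ hle2) hle1
    exact this ▸ ⟨hs1I, t1, ht1I, hc1⟩
  · set θ := (s2 - s)/(s2 - s1) with hθ
    have hd : 0 < s2 - s1 := by linarith
    have hθ0 : 0 ≤ θ := div_nonneg (by linarith) (by linarith)
    have hθ1 : θ ≤ 1 := by rw [div_le_one hd]; linarith
    have hne : s2 - s1 ≠ 0 := ne_of_gt hd
    have hs : s = θ*s1 + (1-θ)*s2 := by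
      rw [hθ]; field_simp; ring
    refine ⟨hs ▸ combo_mem hθ0 hθ1 hs1I hs2I, θ*t1 + (1-θ)*t2,
      combo_mem hθ0 hθ1 ht1I ht2I, fun j => ?_⟩
    have hval : y j - s * α j - (θ*t1 + (1-θ)*t2) * β j
        = θ*(y j - s1 * α j - t1 * β j) + (1-θ)*(y j - s2 * α j - t2 * β j) := by
      rw [hs]; ring
    rw [hval]
    exact combo_mem hθ0 hθ1 (hc1 j) (hc2 j)

lemma abs_sub_le_volume {s : Set ℝ} (hsub : s ⊆ Set.Icc 0 1)
    (hconv : ∀ x1 ∈ s, ∀ x2 ∈ s, ∀ x, x1 ≤ x → x ≤ x2 → x ∈ s)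
    {x1 x2 : ℝ} (h1 : x1 ∈ s) (h2 : x2 ∈ s) : |x1 - x2| ≤ (volume s).toReal := by
  have hfin : volume s ≤ 1 := by
    calc volume s ≤ volume (Set.Icc (0:ℝ) 1) := measure_mono hsub
    _ = 1 := by simp [Real.volume_Icc]
  have main : ∀ a b : ℝ, a ∈ s → b ∈ s → a ≤ b → b - a ≤ (volume s).toReal := by
    intro a b ha hb hab
    have hsub2 : Set.Icc a b ⊆ s := fun x hx => hconv a ha b hb x hx.1 hx.2
    have hv : ENNReal.ofReal (b - a) ≤ volume s := by
      rw [← Real.volume_Icc]; exact measure_mono hsub2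
    have := ENNReal.toReal_mono (ne_top_of_le_ne_top ENNReal.one_ne_top hfin) hv
    rwa [ENNReal.toReal_ofReal (by linarith)] at this
  rcases le_total x1 x2 with h | h
  · rw [abs_of_nonpos (by linarith)]
    have := main x1 x2 h1 h2 h; linarith
  · rw [abs_of_nonneg (by linarith)]
    exact main x2 x1 h2 h1 h

lemma isCompact_W (n : ℕ) (α β : Fin n → ℝ) :
    IsCompact {q : (Fin n → ℝ) × ℝ | q.2 ∈ Set.Icc (0:ℝ) 1 ∧ ∃ t ∈ Set.Icc (0:ℝ) 1,
      ∀ j, q.1 j - q.2 * α j - t * β j ∈ Set.Icc (0:ℝ) 1} := by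
  have h : {q : (Fin n → ℝ) × ℝ | q.2 ∈ Set.Icc (0:ℝ) 1 ∧ ∃ t ∈ Set.Icc (0:ℝ) 1,
      ∀ j, q.1 j - q.2 * α j - t * β j ∈ Set.Icc (0:ℝ) 1}
      = (fun p : ℝ × ℝ × (Fin n → ℝ) => (p.2.2 + p.1 • α + p.2.1 • β, p.1)) ''
      ((Set.Icc (0:ℝ) 1) ×ˢ (Set.Icc (0:ℝ) 1) ×ˢ (Set.pi Set.univ fun _ => Set.Icc (0:ℝ) 1)) := by
    ext q
    constructor
    · rintro ⟨hs, t, ht, hj⟩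
      refine ⟨⟨q.2, t, fun j => q.1 j - q.2 * α j - t * β j⟩, ⟨hs, ht, fun j _ => hj j⟩, ?_⟩
      have : (fun j => q.1 j - q.2 * α j - t * β j) + q.2 • α + t • β = q.1 := by
        funext j; simp [Pi.add_apply]; ring
      simp [this]
    · rintro ⟨⟨s, t, x⟩, ⟨hs, ht, hx⟩, rfl⟩
      refine ⟨hs, t, ht, fun j => ?_⟩
      have := hx j (Set.mem_univ j)
      simp only [Set.mem_Icc] at this ⊢
      constructor <;> simp [Pi.add_apply] <;> linarith [this.1, this.2]
  rw [h]
  exact ((isCompact_Icc.prod (isCompact_Icc.prod (isCompact_univ_pi fun _ => isCompact_Icc)))).image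
    (by fun_prop)

lemma mul_abs_bounds {p c : ℝ} (h0 : 0 ≤ p) (h1 : p ≤ 1) : -|c| ≤ p * c ∧ p * c ≤ |c| := by
  constructor <;> nlinarith [le_abs_self c, neg_abs_le c, abs_nonneg c]

lemma volume_ZS2_le (n : ℕ) (u v : Fin n → ℝ) :
    volume (ZS2 n u v) ≤ ENNReal.ofReal ((1 + ∑ i, |u i|) * (1 + ∑ i, |v i|)) := by
  induction n with
  | zero =>
    have h : volume (ZS2 0 u v) ≤ 1 := by
      calc volume (ZS2 0 u v) ≤ volume (Set.univ : Set (Fin 0 → ℝ)) :=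
            measure_mono (Set.subset_univ _)
      _ = 1 := by simp [MeasureTheory.volume_pi, Measure.pi_univ]
    refine h.trans ?_
    simp
  | succ n ih =>
    set c := u (Fin.last n) with hc
    set d := v (Fin.last n) with hd
    set u' : Fin n → ℝ := fun j => u j.castSucc with hu'
    set v' : Fin n → ℝ := fun j => v j.castSucc with hv'
    have hmp := MeasureTheory.volume_preserving_piFinSuccAbove
      (fun _ : Fin (n+1) => ℝ) (Fin.last n)
    set e := MeasurableEquiv.piFinSuccAbove (fun _ : Fin (n+1) => ℝ) (Fin.last n) with he
    set S2 : Set (ℝ × (Fin n → ℝ)) :=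
      {p | ∃ s ∈ Set.Icc (0:ℝ) 1, ∃ t ∈ Set.Icc (0:ℝ) 1,
        (∀ j, p.2 j - s * u' j - t * v' j ∈ Set.Icc (0:ℝ) 1) ∧
        p.1 - s * c - t * d ∈ Set.Icc (0:ℝ) 1} with hS2
    have himg : e '' (ZS2 (n+1) u v) = S2 := by
      rw [MeasurableEquiv.image_eq_preimage_symm]
      ext p
      simp only [Set.mem_preimage, hS2, Set.mem_setOf_eq, ZS2]
      have hsymm0 : e.symm p = Fin.snoc p.2 p.1 := by
        simp [he, MeasurableEquiv.piFinSuccAbove, Fin.snocEquiv]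
      have hsymm : ∀ i, (e.symm p) i = (Fin.snoc p.2 p.1 : Fin (n+1) → ℝ) i := fun i =>
        congrFun hsymm0 i
      constructor
      · rintro ⟨s, hs, t, ht, hall⟩
        refine ⟨s, hs, t, ht, fun j => ?_, ?_⟩
        · have := hall ((Fin.last n).succAbove j)
          rw [Fin.succAbove_last] at this
          rwa [hsymm, Fin.snoc_castSucc] at this
        · have := hall (Fin.last n)
          rwa [hsymm, Fin.snoc_last] at this
      · rintro ⟨s, hs, t, ht, hrest, hlast⟩
        refine ⟨s, hs, t, ht, ?_⟩
        rw [Fin.forall_iff_succAbove (Fin.last n)]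
        constructor
        · rwa [hsymm, Fin.snoc_last]
        · intro j
          rw [Fin.succAbove_last, hsymm, Fin.snoc_castSucc]
          exact hrest j
    have hZmeas : MeasurableSet (ZS2 (n+1) u v) := (isCompact_ZS2 _ u v).isClosed.measurableSet
    have hSmeas : MeasurableSet S2 := by
      rw [← himg, MeasurableEquiv.image_eq_preimage_symm]
      exact e.symm.measurable hZmeas
    have hpre : e ⁻¹' S2 = ZS2 (n+1) u v := by
      rw [← himg]; exact Set.preimage_image_eq _ e.injective
    have hvol : volume (ZS2 (n+1) u v) = volume S2 := by
      rw [← hpre, ← MeasurableEquiv.map_apply, hmp.map_eq]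
    set W1 : Set ((Fin n → ℝ) × ℝ) :=
      {q | q.2 ∈ Set.Icc (0:ℝ) 1 ∧ ∃ t ∈ Set.Icc (0:ℝ) 1,
        ∀ j, q.1 j - q.2 * u' j - t * v' j ∈ Set.Icc (0:ℝ) 1} with hW1
    set W2 : Set ((Fin n → ℝ) × ℝ) :=
      {q | q.2 ∈ Set.Icc (0:ℝ) 1 ∧ ∃ s ∈ Set.Icc (0:ℝ) 1,
        ∀ j, q.1 j - q.2 * v' j - s * u' j ∈ Set.Icc (0:ℝ) 1} with hW2
    have hW1meas : MeasurableSet W1 := (isCompact_W n u' v').isClosed.measurableSet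
    have hW2meas : MeasurableSet W2 := (isCompact_W n v' u').isClosed.measurableSet
    have hZS2meas : MeasurableSet (ZS2 n u' v') := (isCompact_ZS2 _ u' v').isClosed.measurableSet
    have hPS1 : ∀ y, Prod.mk y ⁻¹' W1 = PS n u' v' y := fun y => rfl
    have hPS2 : ∀ y, Prod.mk y ⁻¹' W2 = PS n v' u' y := fun y => rfl
    have key : ∀ y : Fin n → ℝ, volume ((fun z => (z, y)) ⁻¹' S2)
        ≤ (ZS2 n u' v').indicator (fun _ => (1:ℝ≥0∞)) y
          + ENNReal.ofReal (|c|) * volume (Prod.mk y ⁻¹' W1)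
          + ENNReal.ofReal (|d|) * volume (Prod.mk y ⁻¹' W2) := by
      intro y
      set T2y : Set (ℝ × ℝ) := {p | p.1 ∈ Set.Icc (0:ℝ) 1 ∧ p.2 ∈ Set.Icc (0:ℝ) 1 ∧
        ∀ j, y j - p.1 * u' j - p.2 * v' j ∈ Set.Icc (0:ℝ) 1} with hT2y
      by_cases hne : T2y.Nonempty
      · have memPS1 : ∀ p ∈ T2y, p.1 ∈ PS n u' v' y := by
          rintro p ⟨h1, h2, h3⟩; exact ⟨h1, p.2, h2, h3⟩
        have memPS2 : ∀ p ∈ T2y, p.2 ∈ PS n v' u' y := by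
          rintro p ⟨h1, h2, h3⟩
          refine ⟨h2, p.1, h1, fun j => ?_⟩
          have heq : y j - p.2 * v' j - p.1 * u' j = y j - p.1 * u' j - p.2 * v' j := by ring
          rw [heq]; exact h3 j
        set r1 := (volume (PS n u' v' y)).toReal with hr1
        set r2 := (volume (PS n v' u' y)).toReal with hr2
        have hr1nn : 0 ≤ r1 := ENNReal.toReal_nonneg
        have hr2nn : 0 ≤ r2 := ENNReal.toReal_nonneg
        have hfin1 : volume (PS n u' v' y) ≠ ⊤ := by
          refine ne_top_of_le_ne_top ENNReal.one_ne_top ?_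
          calc volume (PS n u' v' y) ≤ volume (Set.Icc (0:ℝ) 1) :=
                measure_mono (fun s hs => hs.1)
          _ = 1 := by simp [Real.volume_Icc]
        have hfin2 : volume (PS n v' u' y) ≠ ⊤ := by
          refine ne_top_of_le_ne_top ENNReal.one_ne_top ?_
          calc volume (PS n v' u' y) ≤ volume (Set.Icc (0:ℝ) 1) :=
                measure_mono (fun s hs => hs.1)
          _ = 1 := by simp [Real.volume_Icc]
        have diam1 : ∀ x1 ∈ PS n u' v' y, ∀ x2 ∈ PS n u' v' y, |x1 - x2| ≤ r1 := by
          intro x1 h1 x2 h2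
          exact abs_sub_le_volume (fun s hs => hs.1)
            (fun a ha b hb x hx1 hx2 => PS_between ha hb hx1 hx2) h1 h2
        have diam2 : ∀ x1 ∈ PS n v' u' y, ∀ x2 ∈ PS n v' u' y, |x1 - x2| ≤ r2 := by
          intro x1 h1 x2 h2
          exact abs_sub_le_volume (fun s hs => hs.1)
            (fun a ha b hb x hx1 hx2 => PS_between ha hb hx1 hx2) h1 h2
        set Φ : Set ℝ := (fun p : ℝ × ℝ => p.1 * c + p.2 * d) '' T2y with hΦ
        have hΦne : Φ.Nonempty := hne.image _
        have hΦbddA : BddAbove Φ := by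
          refine ⟨|c| + |d|, ?_⟩
          rintro x ⟨p, hp, rfl⟩
          dsimp only
          have b1 := mul_abs_bounds hp.1.1 hp.1.2 (c := c)
          have b2 := mul_abs_bounds hp.2.1.1 hp.2.1.2 (c := d)
          linarith [b1.2, b2.2]
        have hΦbddB : BddBelow Φ := by
          refine ⟨-(|c| + |d|), ?_⟩
          rintro x ⟨p, hp, rfl⟩
          dsimp only
          have b1 := mul_abs_bounds hp.1.1 hp.1.2 (c := c)
          have b2 := mul_abs_bounds hp.2.1.1 hp.2.1.2 (c := d)
          linarith [b1.1, b2.1]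
        set m := sInf Φ with hm
        set M := sSup Φ with hM
        have hsec_sub : (fun z => (z, y)) ⁻¹' S2 ⊆ Set.Icc m (M+1) := by
          rintro z ⟨s, hs, t, ht, hj, hz⟩
          have hmem : s * c + t * d ∈ Φ := ⟨(s, t), ⟨hs, ht, hj⟩, rfl⟩
          obtain ⟨hz1, hz2⟩ := hz
          exact ⟨le_trans (csInf_le hΦbddB hmem) (by linarith),
            le_trans (by linarith) (by linarith [le_csSup hΦbddA hmem] : s * c + t * d + 1 ≤ M + 1)⟩
        have hwidth : M - m ≤ |c| * r1 + |d| * r2 := by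
          have hub : ∀ x ∈ Φ, x ≤ m + (|c| * r1 + |d| * r2) := by
            rintro x ⟨p, hp, rfl⟩
            dsimp only
            have hlb : ∀ x' ∈ Φ, p.1 * c + p.2 * d - (|c| * r1 + |d| * r2) ≤ x' := by
              rintro x' ⟨q, hq, rfl⟩
              dsimp only
              have d1 : |p.1 - q.1| ≤ r1 := diam1 _ (memPS1 p hp) _ (memPS1 q hq)
              have d2 : |p.2 - q.2| ≤ r2 := diam2 _ (memPS2 p hp) _ (memPS2 q hq)
              have e1 : c * (p.1 - q.1) ≤ |c| * r1 := by
                calc c * (p.1 - q.1) ≤ |c * (p.1 - q.1)| := le_abs_self _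
                _ = |c| * |p.1 - q.1| := abs_mul c _
                _ ≤ |c| * r1 := mul_le_mul_of_nonneg_left d1 (abs_nonneg c)
              have e2 : d * (p.2 - q.2) ≤ |d| * r2 := by
                calc d * (p.2 - q.2) ≤ |d * (p.2 - q.2)| := le_abs_self _
                _ = |d| * |p.2 - q.2| := abs_mul d _
                _ ≤ |d| * r2 := mul_le_mul_of_nonneg_left d2 (abs_nonneg d)
              nlinarith [e1, e2]
            have := le_csInf hΦne hlb
            linarith
          have := csSup_le hΦne hub
          linarith
        obtain ⟨p0, hp0⟩ := hne
        have hyZ : y ∈ ZS2 n u' v' := ⟨p0.1, hp0.1, p0.2, hp0.2.1, hp0.2.2⟩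
        calc volume ((fun z => (z, y)) ⁻¹' S2) ≤ volume (Set.Icc m (M+1)) :=
              measure_mono hsec_sub
        _ = ENNReal.ofReal (M + 1 - m) := by rw [Real.volume_Icc]
        _ ≤ ENNReal.ofReal (1 + (|c| * r1 + |d| * r2)) :=
              ENNReal.ofReal_le_ofReal (by linarith)
        _ = 1 + (ENNReal.ofReal (|c| * r1) + ENNReal.ofReal (|d| * r2)) := by
              rw [ENNReal.ofReal_add zero_le_one (by positivity),
                ENNReal.ofReal_add (by positivity) (by positivity), ENNReal.ofReal_one]
        _ = (ZS2 n u' v').indicator (fun _ => (1:ℝ≥0∞)) y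
              + ENNReal.ofReal (|c|) * volume (Prod.mk y ⁻¹' W1)
              + ENNReal.ofReal (|d|) * volume (Prod.mk y ⁻¹' W2) := by
              rw [Set.indicator_of_mem hyZ, hPS1, hPS2,
                ENNReal.ofReal_mul (abs_nonneg c), ENNReal.ofReal_mul (abs_nonneg d),
                hr1, hr2, ENNReal.ofReal_toReal hfin1, ENNReal.ofReal_toReal hfin2]
              ring
      · have hsec : (fun z => (z, y)) ⁻¹' S2 = ∅ := by
          ext z
          simp only [Set.mem_preimage, hS2, Set.mem_setOf_eq, Set.mem_empty_iff_false, iff_false]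
          rintro ⟨s, hs, t, ht, hj, hz⟩
          exact hne ⟨(s, t), hs, ht, hj⟩
        rw [hsec]
        simp
    have hW1val : ((volume : Measure (Fin n → ℝ)).prod volume) W1
        = ENNReal.ofReal (1 + ∑ j, |v' j|) := by
      rw [Measure.prod_apply_symm hW1meas]
      have hpt : ∀ r : ℝ, volume ((fun y : Fin n → ℝ => (y, r)) ⁻¹' W1)
          = (Set.Icc (0:ℝ) 1).indicator (fun _ => ENNReal.ofReal (1 + ∑ j, |v' j|)) r := by
        intro r
        by_cases hrI : r ∈ Set.Icc (0:ℝ) 1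
        · have hset : (fun y : Fin n → ℝ => (y, r)) ⁻¹' W1
              = (fun y => y + (-(r • u'))) ⁻¹' (ZS n v') := by
            ext y
            simp only [Set.mem_preimage, hW1, Set.mem_setOf_eq, hrI, true_and, ZS,
              Pi.add_apply, Pi.neg_apply, Pi.smul_apply, smul_eq_mul]
            refine exists_congr fun t => and_congr_right fun _ => forall_congr' fun j => ?_
            rw [show y j + -(r * u' j) - t * v' j = y j - r * u' j - t * v' j from by ring]
          rw [hset, measure_preimage_add_right, volume_ZS, Set.indicator_of_mem hrI]
        · have hset : (fun y : Fin n → ℝ => (y, r)) ⁻¹' W1 = ∅ := by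
            ext y
            simp only [Set.mem_preimage, hW1, Set.mem_setOf_eq, Set.mem_empty_iff_false, iff_false]
            rintro ⟨h1, _⟩; exact hrI h1
          rw [hset, Set.indicator_of_notMem hrI]; simp
      rw [lintegral_congr hpt, lintegral_indicator_const measurableSet_Icc, Real.volume_Icc]
      simp
    have hW2val : ((volume : Measure (Fin n → ℝ)).prod volume) W2
        = ENNReal.ofReal (1 + ∑ j, |u' j|) := by
      rw [Measure.prod_apply_symm hW2meas]
      have hpt : ∀ r : ℝ, volume ((fun y : Fin n → ℝ => (y, r)) ⁻¹' W2)
          = (Set.Icc (0:ℝ) 1).indicator (fun _ => ENNReal.ofReal (1 + ∑ j, |u' j|)) r := by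
        intro r
        by_cases hrI : r ∈ Set.Icc (0:ℝ) 1
        · have hset : (fun y : Fin n → ℝ => (y, r)) ⁻¹' W2
              = (fun y => y + (-(r • v'))) ⁻¹' (ZS n u') := by
            ext y
            simp only [Set.mem_preimage, hW2, Set.mem_setOf_eq, hrI, true_and, ZS,
              Pi.add_apply, Pi.neg_apply, Pi.smul_apply, smul_eq_mul]
            refine exists_congr fun s => and_congr_right fun _ => forall_congr' fun j => ?_
            rw [show y j + -(r * v' j) - s * u' j = y j - r * v' j - s * u' j from by ring]
          rw [hset, measure_preimage_add_right, volume_ZS, Set.indicator_of_mem hrI]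
        · have hset : (fun y : Fin n → ℝ => (y, r)) ⁻¹' W2 = ∅ := by
            ext y
            simp only [Set.mem_preimage, hW2, Set.mem_setOf_eq, Set.mem_empty_iff_false, iff_false]
            rintro ⟨h1, _⟩; exact hrI h1
          rw [hset, Set.indicator_of_notMem hrI]; simp
      rw [lintegral_congr hpt, lintegral_indicator_const measurableSet_Icc, Real.volume_Icc]
      simp
    have ha' : (0:ℝ) ≤ ∑ j, |u' j| := Finset.sum_nonneg fun i _ => abs_nonneg _
    have hb' : (0:ℝ) ≤ ∑ j, |v' j| := Finset.sum_nonneg fun i _ => abs_nonneg _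
    calc volume (ZS2 (n+1) u v) = ((volume : Measure ℝ).prod volume) S2 := by
          rw [hvol, Measure.volume_eq_prod]
    _ = ∫⁻ y, volume ((fun z => (z, y)) ⁻¹' S2) ∂volume := Measure.prod_apply_symm hSmeas
    _ ≤ ∫⁻ y, ((ZS2 n u' v').indicator (fun _ => (1:ℝ≥0∞)) y
          + ENNReal.ofReal (|c|) * volume (Prod.mk y ⁻¹' W1)
          + ENNReal.ofReal (|d|) * volume (Prod.mk y ⁻¹' W2)) ∂volume := lintegral_mono key
    _ = volume (ZS2 n u' v')
          + ENNReal.ofReal (|c|) * ((volume : Measure (Fin n → ℝ)).prod volume) W1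
          + ENNReal.ofReal (|d|) * ((volume : Measure (Fin n → ℝ)).prod volume) W2 := by
          rw [lintegral_add_right _ ((measurable_measure_prodMk_left hW2meas).const_mul _),
            lintegral_add_right _ ((measurable_measure_prodMk_left hW1meas).const_mul _),
            lintegral_indicator_const hZS2meas, one_mul,
            lintegral_const_mul _ (measurable_measure_prodMk_left hW1meas),
            lintegral_const_mul _ (measurable_measure_prodMk_left hW2meas),
            Measure.prod_apply hW1meas, Measure.prod_apply hW2meas]
    _ ≤ ENNReal.ofReal ((1 + ∑ j, |u' j|) * (1 + ∑ j, |v' j|))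
          + ENNReal.ofReal (|c| * (1 + ∑ j, |v' j|))
          + ENNReal.ofReal (|d| * (1 + ∑ j, |u' j|)) := by
          rw [hW1val, hW2val, ← ENNReal.ofReal_mul (abs_nonneg c),
            ← ENNReal.ofReal_mul (abs_nonneg d)]
          exact add_le_add (add_le_add (ih u' v') le_rfl) le_rfl
    _ ≤ ENNReal.ofReal ((1 + ∑ i, |u i|) * (1 + ∑ i, |v i|)) := by
          rw [← ENNReal.ofReal_add (by positivity) (by positivity),
            ← ENNReal.ofReal_add (by positivity) (by positivity)]
          apply ENNReal.ofReal_le_ofReal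
          rw [Fin.sum_univ_castSucc, Fin.sum_univ_castSucc]
          simp only [hu', hv', hc, hd]
          nlinarith [abs_nonneg (u (Fin.last n)), abs_nonneg (v (Fin.last n)), ha', hb']


lemma volume_cube (n : ℕ) :
    volume {x : Fin n → ℝ | ∀ i, x i ∈ Set.Icc (0:ℝ) 1} = 1 := by
  have h : {x : Fin n → ℝ | ∀ i, x i ∈ Set.Icc (0:ℝ) 1}
      = Set.pi Set.univ fun _ => Set.Icc (0:ℝ) 1 := by
    ext x
    constructor
    · intro h i _; exact h i
    · intro h i; exact h i (Set.mem_univ i)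
  rw [h, volume_pi_pi]
  simp [Real.volume_Icc]

/-- Local Alexandrov–Fenchel inequality for the unit cube `A = [0,1]ⁿ` and two segments
`[0,u]`, `[0,v]` with `u, v` unit vectors:
`|A| · V(A[n-2],[0,u],[0,v]) ≤ (n/(n-1)) · V(A[n-1],[0,u]) · V(A[n-1],[0,v])`.
Mixed volumes are encoded through the coefficients of the polynomial expansion
`|A + s·[0,u] + t·[0,v]| = |A| + n·V(A[n-1],[0,u])·s + n·V(A[n-1],[0,v])·t
  + n(n-1)·V(A[n-2],[0,u],[0,v])·st`  (the terms with a segment repeated twice vanish). -/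
theorem cube_local_alexandrov_fenchel (n : ℕ) (hn : 2 ≤ n)
    (u v : EuclideanSpace ℝ (Fin n)) (hu : ‖u‖ = 1) (hv : ‖v‖ = 1)
    (A : Set (EuclideanSpace ℝ (Fin n)))
    (hA : A = {x : EuclideanSpace ℝ (Fin n) | ∀ i, x i ∈ Set.Icc (0:ℝ) 1})
    (Vu Vv Vuv : ℝ)
    (hexp : ∀ s t : ℝ, 0 ≤ s → 0 ≤ t →
      (volume (A + s • segment ℝ 0 u + t • segment ℝ 0 v)).toReal =
        (volume A).toReal + (n : ℝ) * Vu * s + (n : ℝ) * Vv * t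
          + (n : ℝ) * ((n : ℝ) - 1) * Vuv * (s * t)) :
    (volume A).toReal * Vuv ≤ ((n : ℝ) / ((n : ℝ) - 1)) * Vu * Vv := by
  have hseg : ∀ (w x : EuclideanSpace ℝ (Fin n)),
      x ∈ segment ℝ 0 w ↔ ∃ t ∈ Set.Icc (0:ℝ) 1, x = t • w := by
    intro w x
    rw [segment_eq_image]
    constructor
    · rintro ⟨t, ht, rfl⟩; exact ⟨t, ht, by simp⟩
    · rintro ⟨t, ht, rfl⟩; exact ⟨t, ht, by simp⟩
  have haddseg : ∀ (S : Set (EuclideanSpace ℝ (Fin n))) (w : EuclideanSpace ℝ (Fin n)),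
      S + segment ℝ 0 w = {x | ∃ t ∈ Set.Icc (0:ℝ) 1, x - t • w ∈ S} := by
    intro S w
    ext x
    constructor
    · rintro ⟨a, ha, b, hb, rfl⟩
      obtain ⟨t, ht, rfl⟩ := (hseg w b).1 hb
      refine ⟨t, ht, ?_⟩
      simpa using ha
    · rintro ⟨t, ht, hx⟩
      exact ⟨x - t • w, hx, t • w, (hseg w _).2 ⟨t, ht, rfl⟩, by simp⟩
  have happly : ∀ (x w : EuclideanSpace ℝ (Fin n)) (t : ℝ) (i : Fin n),
      (x - t • w) i = x i - t * w i := fun x w t i => rfl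
  -- set identifications
  have hAU : A + segment ℝ 0 u
      = {x : EuclideanSpace ℝ (Fin n) | ∃ t ∈ Set.Icc (0:ℝ) 1,
          ∀ i, x i - t * u i ∈ Set.Icc (0:ℝ) 1} := by
    rw [haddseg, hA]
    ext x
    simp only [Set.mem_setOf_eq]
    refine exists_congr fun t => and_congr_right fun _ => forall_congr' fun i => ?_
    rw [happly]
  have hAUV : A + segment ℝ 0 u + segment ℝ 0 v
      = {x : EuclideanSpace ℝ (Fin n) | ∃ s ∈ Set.Icc (0:ℝ) 1, ∃ t ∈ Set.Icc (0:ℝ) 1,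
          ∀ i, x i - s * u i - t * v i ∈ Set.Icc (0:ℝ) 1} := by
    rw [haddseg, hAU]
    ext x
    simp only [Set.mem_setOf_eq]
    constructor
    · rintro ⟨t, ht, s, hs, h⟩
      refine ⟨s, hs, t, ht, fun i => ?_⟩
      have := h i
      rw [happly, sub_right_comm] at this
      exact this
    · rintro ⟨s, hs, t, ht, h⟩
      refine ⟨t, ht, s, hs, fun i => ?_⟩
      rw [happly, sub_right_comm]
      exact h i
  -- transfer to pi space
  have htrans : ∀ (SE : Set (EuclideanSpace ℝ (Fin n))) (SP : Set (Fin n → ℝ)),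
      (MeasurableEquiv.toLp 2 (Fin n → ℝ)).symm ⁻¹' SP = SE → volume SE = volume SP := by
    intro SE SP h
    rw [← h]
    calc volume ((MeasurableEquiv.toLp 2 (Fin n → ℝ)).symm ⁻¹' SP)
        = (volume.map (MeasurableEquiv.toLp 2 (Fin n → ℝ)).symm) SP :=
          ((MeasurableEquiv.toLp 2 (Fin n → ℝ)).symm.map_apply SP).symm
    _ = volume SP := by
          rw [(EuclideanSpace.volume_preserving_symm_measurableEquiv_toLp (Fin n)).map_eq]
  have hvolA : volume A = 1 := by
    have h := htrans A {x : Fin n → ℝ | ∀ i, x i ∈ Set.Icc (0:ℝ) 1} (by rw [hA]; rfl)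
    rw [h, volume_cube]
  have hvolAU : volume (A + segment ℝ 0 u) = ENNReal.ofReal (1 + ∑ i, |u i|) := by
    have h := htrans (A + segment ℝ 0 u) (ZS n (fun i => u i)) (by rw [hAU]; rfl)
    rw [h, volume_ZS]
  have hvolAV : volume (A + segment ℝ 0 v) = ENNReal.ofReal (1 + ∑ i, |v i|) := by
    have hAV : A + segment ℝ 0 v
        = {x : EuclideanSpace ℝ (Fin n) | ∃ t ∈ Set.Icc (0:ℝ) 1,
            ∀ i, x i - t * v i ∈ Set.Icc (0:ℝ) 1} := by
      rw [haddseg, hA]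
      ext x
      simp only [Set.mem_setOf_eq]
      refine exists_congr fun t => and_congr_right fun _ => forall_congr' fun i => ?_
      rw [happly]
    have h := htrans (A + segment ℝ 0 v) (ZS n (fun i => v i)) (by rw [hAV]; rfl)
    rw [h, volume_ZS]
  have hvolAUV : volume (A + segment ℝ 0 u + segment ℝ 0 v)
      ≤ ENNReal.ofReal ((1 + ∑ i, |u i|) * (1 + ∑ i, |v i|)) := by
    have h := htrans (A + segment ℝ 0 u + segment ℝ 0 v)
      (ZS2 n (fun i => u i) (fun i => v i)) (by rw [hAUV]; rfl)
    rw [h]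
    exact volume_ZS2_le n _ _
  -- algebra
  set a : ℝ := ∑ i, |u i| with ha
  set b : ℝ := ∑ i, |v i| with hb
  have ha0 : 0 ≤ a := Finset.sum_nonneg fun i _ => abs_nonneg _
  have hb0 : 0 ≤ b := Finset.sum_nonneg fun i _ => abs_nonneg _
  have hsegu_ne : (segment ℝ 0 u).Nonempty := ⟨0, left_mem_segment ℝ 0 u⟩
  have hsegv_ne : (segment ℝ 0 v).Nonempty := ⟨0, left_mem_segment ℝ 0 v⟩
  have hAtoReal : (volume A).toReal = 1 := by rw [hvolA]; simp
  have h10 : 1 + a = 1 + (n:ℝ) * Vu := by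
    have := hexp 1 0 zero_le_one le_rfl
    rw [one_smul, zero_smul_set hsegv_ne, add_zero, hvolAU, hAtoReal] at this
    rw [ENNReal.toReal_ofReal (by linarith)] at this
    linarith [this]
  have h01 : 1 + b = 1 + (n:ℝ) * Vv := by
    have := hexp 0 1 le_rfl zero_le_one
    rw [one_smul, zero_smul_set hsegu_ne, add_zero, hvolAV, hAtoReal] at this
    rw [ENNReal.toReal_ofReal (by linarith)] at this
    linarith [this]
  have h11 : 1 + (n:ℝ) * Vu + (n:ℝ) * Vv + (n:ℝ) * ((n:ℝ) - 1) * Vuv ≤ (1 + a) * (1 + b) := by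
    have heq := hexp 1 1 zero_le_one zero_le_one
    rw [one_smul, one_smul, hAtoReal] at heq
    have hle : (volume (A + segment ℝ 0 u + segment ℝ 0 v)).toReal ≤ (1 + a) * (1 + b) :=
      ENNReal.toReal_le_of_le_ofReal (by nlinarith) hvolAUV
    rw [heq] at hle
    linarith [hle]
  have hVu : (n:ℝ) * Vu = a := by linarith
  have hVv : (n:ℝ) * Vv = b := by linarith
  have hkey : (n:ℝ) * ((n:ℝ) - 1) * Vuv ≤ ((n:ℝ) * Vu) * ((n:ℝ) * Vv) := by
    rw [hVu, hVv]; nlinarith [h11, hVu, hVv]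
  have hn' : (2:ℝ) ≤ (n:ℝ) := by exact_mod_cast hn
  rw [hAtoReal, one_mul]
  rw [div_mul_eq_mul_div, div_mul_eq_mul_div, le_div_iff₀ (by linarith : (0:ℝ) < (n:ℝ) - 1)]
  nlinarith [hkey, hn']
end

section
/- Let u₁,...,u_m ∈ ℝⁿ with m ≥ n, and let U be the n × m matrix with columns u₁,...,u_m. Then the ℓ₂-sum [-u₁,u₁] ⊕₂ ··· ⊕₂ [-u_m,u_m] equals U(B₂^m) = √(UU*) B₂ⁿ, and its volume squared equals |B₂ⁿ|² · Σ_{|I|=n} (det(uᵢ)_{i∈I})², the sum over n-element subsets I of {1,...,m} (Cauchy–Binet). -/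
open MeasureTheory
open scoped RealInnerProductSpace

section
open scoped ComplexOrder
/-- The positive semidefinite square root of a positive semidefinite matrix
(the definition of `Matrix.PosSemidef.sqrt` in the older Mathlib, since removed). -/
noncomputable def Matrix.PosSemidef.sqrt {n : Type*} [Fintype n] [DecidableEq n]
    {𝕜 : Type*} [RCLike 𝕜] {A : Matrix n n 𝕜} (hA : A.PosSemidef) : Matrix n n 𝕜 :=
  (hA.1.eigenvectorUnitary : Matrix n n 𝕜) *
    Matrix.diagonal ((RCLike.ofReal : ℝ → 𝕜) ∘ (√·) ∘ hA.1.eigenvalues) *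
  (star hA.1.eigenvectorUnitary : Matrix n n 𝕜)

end

section
open scoped ComplexOrder
private lemma psd_sqrt_conjTranspose {n : Type*} [Fintype n] [DecidableEq n]
    {𝕜 : Type*} [RCLike 𝕜] {A : Matrix n n 𝕜} (hA : A.PosSemidef) :
    hA.sqrt.conjTranspose = hA.sqrt := by
  unfold Matrix.PosSemidef.sqrt
  rw [Matrix.conjTranspose_mul, Matrix.conjTranspose_mul, Matrix.diagonal_conjTranspose]
  have hd : star ((RCLike.ofReal : ℝ → 𝕜) ∘ (√·) ∘ hA.1.eigenvalues)
      = (RCLike.ofReal : ℝ → 𝕜) ∘ (√·) ∘ hA.1.eigenvalues := by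
    funext i; simp
  rw [hd]
  simp [Matrix.star_eq_conjTranspose, Matrix.mul_assoc]

private lemma psd_sqrt_mul_self {n : Type*} [Fintype n] [DecidableEq n]
    {𝕜 : Type*} [RCLike 𝕜] {A : Matrix n n 𝕜} (hA : A.PosSemidef) :
    hA.sqrt * hA.sqrt = A := by
  unfold Matrix.PosSemidef.sqrt
  have hV : (star hA.1.eigenvectorUnitary : Matrix n n 𝕜) * (hA.1.eigenvectorUnitary : Matrix n n 𝕜) = 1 :=
    Unitary.coe_star_mul_self _
  have hD : Matrix.diagonal ((RCLike.ofReal : ℝ → 𝕜) ∘ (√·) ∘ hA.1.eigenvalues) *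
      Matrix.diagonal ((RCLike.ofReal : ℝ → 𝕜) ∘ (√·) ∘ hA.1.eigenvalues)
      = Matrix.diagonal ((RCLike.ofReal : ℝ → 𝕜) ∘ hA.1.eigenvalues) := by
    rw [Matrix.diagonal_mul_diagonal]
    congr 1; funext i
    simp only [Function.comp_apply, ← RCLike.ofReal_mul]
    rw [Real.mul_self_sqrt (hA.eigenvalues_nonneg i)]
  calc _ = (hA.1.eigenvectorUnitary : Matrix n n 𝕜) *
        (Matrix.diagonal ((RCLike.ofReal : ℝ → 𝕜) ∘ (√·) ∘ hA.1.eigenvalues) *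
        ((star hA.1.eigenvectorUnitary : Matrix n n 𝕜) * (hA.1.eigenvectorUnitary : Matrix n n 𝕜)) *
        Matrix.diagonal ((RCLike.ofReal : ℝ → 𝕜) ∘ (√·) ∘ hA.1.eigenvalues)) *
        (star hA.1.eigenvectorUnitary : Matrix n n 𝕜) := by simp only [Matrix.mul_assoc]
    _ = A := by
      rw [hV, Matrix.mul_one, hD]
      conv_rhs => rw [hA.1.spectral_theorem]
      simp
end

section Helpers

open Finset Matrix

private lemma cb_step1 {n m : ℕ} {R : Type*} [CommRing R] (A : Matrix (Fin n) (Fin m) R)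
    (B : Matrix (Fin m) (Fin n) R) :
    (A * B).det = ∑ f : Fin n → Fin m, (∏ i, A i (f i)) * (B.submatrix f id).det := by
  have h1 : (A * B) = Matrix.of fun i => ∑ j, A i j • B j := by
    ext i k; simp [Matrix.mul_apply]
  have h2 : (Matrix.of fun i => ∑ j, A i j • B j).det
      = ∑ f : Fin n → Fin m, (Matrix.detRowAlternating : (Fin n → R) [⋀^Fin n]→ₗ[R] R)
          fun i => A i (f i) • B (f i) :=
    (Matrix.detRowAlternating : (Fin n → R) [⋀^Fin n]→ₗ[R] R).toMultilinearMap.map_sum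
      (g := fun i j => A i j • B j)
  rw [h1, h2]
  refine Fintype.sum_congr _ _ fun f => ?_
  have h3 : ((Matrix.detRowAlternating : (Fin n → R) [⋀^Fin n]→ₗ[R] R)
        fun i => A i (f i) • B (f i))
      = (∏ i, A i (f i)) • (Matrix.detRowAlternating : (Fin n → R) [⋀^Fin n]→ₗ[R] R)
          fun i => B (f i) :=
    (Matrix.detRowAlternating : (Fin n → R) [⋀^Fin n]→ₗ[R] R).toMultilinearMap.map_smul_univ
      (fun i => A i (f i)) (fun i => B (f i))
  rw [h3, smul_eq_mul]
  rfl

private lemma cauchyBinet {n m : ℕ} {R : Type*} [CommRing R] (A : Matrix (Fin n) (Fin m) R)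
    (B : Matrix (Fin m) (Fin n) R) :
    (A * B).det = ∑ I : {s : Finset (Fin m) // s.card = n},
      (A.submatrix id (fun j : Fin n => ((I.1.orderIsoOfFin I.2) j : Fin m))).det *
      (B.submatrix (fun j : Fin n => ((I.1.orderIsoOfFin I.2) j : Fin m)) id).det := by
  classical
  rw [cb_step1]
  have hfilter : ∑ f : Fin n → Fin m, (∏ i, A i (f i)) * (B.submatrix f id).det
      = ∑ f ∈ Finset.univ.filter (fun f : Fin n → Fin m => Function.Injective f),
          (∏ i, A i (f i)) * (B.submatrix f id).det := by
    refine (Finset.sum_filter_of_ne fun f _ hf => ?_).symm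
    by_contra hinj
    apply hf
    obtain ⟨i, j, hij, hne⟩ : ∃ i j, f i = f j ∧ i ≠ j := by
      rw [Function.Injective] at hinj; push_neg at hinj
      obtain ⟨i, j, h1, h2⟩ := hinj; exact ⟨i, j, h1, h2⟩
    have hz : (B.submatrix f id).det = 0 :=
      Matrix.det_zero_of_row_eq hne (by ext k; simp [Matrix.submatrix_apply, hij])
    rw [hz, mul_zero]
  rw [hfilter]
  have hbij : ∑ f ∈ Finset.univ.filter (fun f : Fin n → Fin m => Function.Injective f),
        (∏ i, A i (f i)) * (B.submatrix f id).det
      = ∑ p : {s : Finset (Fin m) // s.card = n} × Equiv.Perm (Fin n),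
          (∏ i, A i (p.1.1.orderIsoOfFin p.1.2 (p.2 i) : Fin m)) *
            (B.submatrix (fun i => (p.1.1.orderIsoOfFin p.1.2 (p.2 i) : Fin m)) id).det := by
    refine (Finset.sum_bij
      (i := fun (p : {s : Finset (Fin m) // s.card = n} × Equiv.Perm (Fin n)) _ =>
        fun i => (p.1.1.orderIsoOfFin p.1.2 (p.2 i) : Fin m)) ?_ ?_ ?_ ?_).symm
    · intro p _
      simp only [Finset.mem_filter, Finset.mem_univ, true_and]
      intro a b hab
      exact p.2.injective ((p.1.1.orderIsoOfFin p.1.2).injective (Subtype.ext hab))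
    · intro p _ q _ hpq
      have hpq' : ∀ i : Fin n, (p.1.1.orderIsoOfFin p.1.2 (p.2 i) : Fin m)
          = (q.1.1.orderIsoOfFin q.1.2 (q.2 i) : Fin m) := fun i => congrFun hpq i
      have himg : ∀ (r : {s : Finset (Fin m) // s.card = n} × Equiv.Perm (Fin n)) (a : Fin m),
          (∃ i, (r.1.1.orderIsoOfFin r.1.2 (r.2 i) : Fin m) = a) ↔ a ∈ r.1.1 := by
        intro r a
        constructor
        · rintro ⟨i, rfl⟩; exact (r.1.1.orderIsoOfFin r.1.2 (r.2 i)).2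
        · intro ha
          exact ⟨r.2.symm ((r.1.1.orderIsoOfFin r.1.2).symm ⟨a, ha⟩), by simp⟩
      have h1 : p.1 = q.1 := by
        refine Subtype.ext (Finset.ext fun a => ?_)
        rw [← himg p a, ← himg q a]
        constructor
        · rintro ⟨i, hi⟩; exact ⟨i, (hpq' i).symm.trans hi⟩
        · rintro ⟨i, hi⟩; exact ⟨i, (hpq' i).trans hi⟩
      obtain ⟨⟨s, hs⟩, σ⟩ := p
      obtain ⟨⟨t, ht⟩, τ⟩ := q
      obtain rfl : s = t := congrArg Subtype.val h1
      refine Prod.ext (Subtype.ext rfl) ?_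
      show σ = τ
      ext i
      exact congrArg Fin.val ((s.orderIsoOfFin hs).injective (Subtype.ext (hpq' i)))
    · intro f hf
      rw [Finset.mem_filter] at hf
      have hinj : Function.Injective f := hf.2
      have hs : (Finset.univ.image f).card = n := by
        rw [Finset.card_image_of_injective _ hinj, Finset.card_univ, Fintype.card_fin]
      have hmem : ∀ i, f i ∈ Finset.univ.image f := fun i =>
        Finset.mem_image.mpr ⟨i, Finset.mem_univ i, rfl⟩
      set g : Fin n → Fin n := fun i =>
        ((Finset.univ.image f).orderIsoOfFin hs).symm ⟨f i, hmem i⟩ with hg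
      have hginj : Function.Injective g := by
        intro a b hab
        have := ((Finset.univ.image f).orderIsoOfFin hs).symm.injective hab
        exact hinj (congrArg Subtype.val this)
      have hgbij : Function.Bijective g := Finite.injective_iff_bijective.mp hginj
      refine ⟨⟨⟨Finset.univ.image f, hs⟩, Equiv.ofBijective g hgbij⟩, Finset.mem_univ _, ?_⟩
      funext i
      show ((Finset.univ.image f).orderIsoOfFin hs (g i) : Fin m) = f i
      simp [hg]
    · intro p _
      rfl
  rw [hbij, Fintype.sum_prod_type]
  refine Fintype.sum_congr _ _ fun I => ?_
  obtain ⟨s, hs⟩ := I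
  set e : Fin n → Fin m := fun j => (s.orderIsoOfFin hs j : Fin m) with he
  have hperm : ∀ σ : Equiv.Perm (Fin n),
      (B.submatrix (fun i => e (σ i)) id).det
        = (Equiv.Perm.sign σ : R) * (B.submatrix e id).det := by
    intro σ
    have h : B.submatrix (fun i => e (σ i)) id = (B.submatrix e id).submatrix σ id := rfl
    rw [h, Matrix.det_permute]
  calc ∑ σ : Equiv.Perm (Fin n), (∏ i, A i (e (σ i))) * (B.submatrix (fun i => e (σ i)) id).det
      = (∑ σ : Equiv.Perm (Fin n), (Equiv.Perm.sign σ : R) * ∏ i, A i (e (σ i)))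
          * (B.submatrix e id).det := by
        rw [Finset.sum_mul]
        refine Fintype.sum_congr _ _ fun σ => ?_
        rw [hperm σ]
        try ring
    _ = (A.submatrix id e).det * (B.submatrix e id).det := by
        congr 1
        rw [← Matrix.det_transpose, Matrix.det_apply']
        refine Fintype.sum_congr _ _ fun σ => ?_
        congr 1

private lemma key_ball {E F : Type*} [NormedAddCommGroup E] [InnerProductSpace ℝ E]
    [NormedAddCommGroup F] [InnerProductSpace ℝ F] [FiniteDimensional ℝ E]
    [FiniteDimensional ℝ F] (A : E →L[ℝ] F) :
    {y : F | ∀ x : F, ⟪x, y⟫ ≤ ‖(ContinuousLinearMap.adjoint A) x‖}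
      = A '' Metric.closedBall 0 1 := by
  ext y
  simp only [Set.mem_setOf_eq]
  constructor
  · intro hy
    by_contra hyn
    have hconv : Convex ℝ (A '' Metric.closedBall 0 1) :=
      (convex_closedBall (0 : E) 1).linear_image (A : E →ₗ[ℝ] F)
    have hcomp : IsCompact (A '' Metric.closedBall 0 1) :=
      (isCompact_closedBall (0 : E) 1).image A.continuous
    obtain ⟨f, u, hfa, hfy⟩ :=
      geometric_hahn_banach_closed_point hconv hcomp.isClosed hyn
    set x₀ : F := (InnerProductSpace.toDual ℝ F).symm f with hx₀
    have hfz : ∀ z : F, f z = ⟪x₀, z⟫ := by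
      intro z
      rw [hx₀, InnerProductSpace.toDual_symm_apply]
    set w : E := (ContinuousLinearMap.adjoint A) x₀ with hw
    have hball : ∀ z ∈ Metric.closedBall (0 : E) 1, ⟪x₀, A z⟫ < u := by
      intro z hz
      rw [← hfz]
      exact hfa _ ⟨z, hz, rfl⟩
    have hwle : ‖w‖ < u := by
      by_cases hw0 : w = 0
      · have := hball 0 (by simp)
        simpa [hw0] using this
      · have hz1 : ‖w‖⁻¹ • w ∈ Metric.closedBall (0 : E) 1 := by
          simp [norm_smul, abs_of_nonneg (inv_nonneg.mpr (norm_nonneg w)),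
            inv_mul_cancel₀ (norm_ne_zero_iff.mpr hw0)]
        have := hball _ hz1
        rwa [← ContinuousLinearMap.adjoint_inner_left, ← hw, real_inner_smul_right,
          real_inner_self_eq_norm_sq, pow_two, inv_mul_cancel_left₀
          (norm_ne_zero_iff.mpr hw0)] at this
    have h2 : u < ⟪x₀, y⟫ := by rw [← hfz]; exact hfy
    have := hy x₀
    rw [← hw] at this
    linarith
  · rintro ⟨z, hz, rfl⟩ x
    calc ⟪x, A z⟫ = ⟪(ContinuousLinearMap.adjoint A) x, z⟫ :=
          (ContinuousLinearMap.adjoint_inner_left A z x).symm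
      _ ≤ ‖(ContinuousLinearMap.adjoint A) x‖ * ‖z‖ := real_inner_le_norm _ _
      _ ≤ ‖(ContinuousLinearMap.adjoint A) x‖ := by
          have hz1 : ‖z‖ ≤ 1 := by simpa using mem_closedBall_zero_iff.mp hz
          nlinarith [norm_nonneg ((ContinuousLinearMap.adjoint A) x)]

private lemma clm_adjoint_eq {k l : ℕ} (M : Matrix (Fin k) (Fin l) ℝ) :
    ContinuousLinearMap.adjoint (LinearMap.toContinuousLinearMap (Matrix.toEuclideanLin M))
      = LinearMap.toContinuousLinearMap (Matrix.toEuclideanLin Mᴴ) := by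
  rw [Matrix.toEuclideanLin_conjTranspose_eq_adjoint, LinearMap.adjoint_toContinuousLinearMap]

private lemma toEL_comp {k l r : ℕ} (M : Matrix (Fin k) (Fin l) ℝ)
    (N : Matrix (Fin l) (Fin r) ℝ) (x : EuclideanSpace ℝ (Fin r)) :
    Matrix.toEuclideanLin M (Matrix.toEuclideanLin N x)
      = Matrix.toEuclideanLin (M * N) x := by
  simp [Matrix.toEuclideanLin_apply, Matrix.mulVec_mulVec]

private lemma normsq_eq {n k : ℕ} (M : Matrix (Fin n) (Fin k) ℝ)
    (x : EuclideanSpace ℝ (Fin n)) :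
    ‖Matrix.toEuclideanLin Mᴴ x‖ ^ 2
      = ⟪x, Matrix.toEuclideanLin (M * Mᴴ) x⟫ := by
  rw [← real_inner_self_eq_norm_sq, ← toEL_comp M Mᴴ x,
    Matrix.toEuclideanLin_conjTranspose_eq_adjoint, LinearMap.adjoint_inner_left]

end Helpers

/-- The `ℓ₂`-sum `[-u₁,u₁] ⊕₂ ⋯ ⊕₂ [-u_m,u_m]` equals `U(B₂^m) = √(UU*)(B₂ⁿ)`, where `U`
is the `n × m` matrix with columns `u₁,…,u_m`, and its volume squared equals
`|B₂ⁿ|² · Σ_{|I|=n} det((uᵢ)_{i∈I})²` (Cauchy–Binet). The `ℓ₂`-sum is described as the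
body whose support function is `x ↦ √(Σᵢ ⟨uᵢ,x⟩²)`. -/
theorem l2_sum_segments (n m : ℕ) (hm : n ≤ m)
    (u : Fin m → EuclideanSpace ℝ (Fin n))
    (U : Matrix (Fin n) (Fin m) ℝ) (hU : ∀ i j, U i j = u j i)
    (K : Set (EuclideanSpace ℝ (Fin n)))
    (hK : K = {y : EuclideanSpace ℝ (Fin n) |
      ∀ x : EuclideanSpace ℝ (Fin n), ⟪x, y⟫ ≤ Real.sqrt (∑ i : Fin m, ⟪u i, x⟫ ^ 2)}) :
    K = (Matrix.toEuclideanLin U) '' Metric.closedBall 0 1 ∧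
    (∀ h : (U * U.conjTranspose).PosSemidef,
      K = (Matrix.toEuclideanLin h.sqrt) '' Metric.closedBall 0 1) ∧
    (volume K).toReal ^ 2 =
      (volume (Metric.closedBall (0 : EuclideanSpace ℝ (Fin n)) 1)).toReal ^ 2 *
        ∑ I : {s : Finset (Fin m) // s.card = n},
          (U.submatrix id (fun j : Fin n => ((I.1.orderIsoOfFin I.2) j : Fin m))).det ^ 2 := by
  -- the support function equals ‖U.conjTranspose x‖
  have hUHx : ∀ x : EuclideanSpace ℝ (Fin n),
      Real.sqrt (∑ i : Fin m, ⟪u i, x⟫ ^ 2) = ‖Matrix.toEuclideanLin U.conjTranspose x‖ := by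
    intro x
    rw [EuclideanSpace.norm_eq]
    congr 1
    refine Fintype.sum_congr _ _ fun i => ?_
    rw [Real.norm_eq_abs, sq_abs]
    congr 1
    simp only [Matrix.toEuclideanLin_apply, PiLp.toLp_apply, Matrix.mulVec,
      dotProduct, Matrix.conjTranspose_apply, star_trivial]
    rw [PiLp.inner_apply]
    refine Fintype.sum_congr _ _ fun k => ?_
    simp [hU, mul_comm]
  -- Part 1
  have part1 : K = (Matrix.toEuclideanLin U) '' Metric.closedBall 0 1 := by
    rw [hK]
    have := key_ball (LinearMap.toContinuousLinearMap (Matrix.toEuclideanLin U))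
    rw [clm_adjoint_eq] at this
    simp only [LinearMap.coe_toContinuousLinearMap', LinearMap.coe_toContinuousLinearMap] at this
    rw [← this]
    ext y
    simp only [Set.mem_setOf_eq]
    constructor
    · intro hy x; rw [← hUHx x]; exact hy x
    · intro hy x; rw [hUHx x]; exact hy x
  have part2 : ∀ h : (U * U.conjTranspose).PosSemidef,
      K = (Matrix.toEuclideanLin h.sqrt) '' Metric.closedBall 0 1 := by
    intro h
    have hSH : h.sqrt.conjTranspose = h.sqrt := psd_sqrt_conjTranspose h
    have hkey : h.sqrt * h.sqrt.conjTranspose = U * U.conjTranspose := by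
      rw [hSH, psd_sqrt_mul_self h]
    have hnorm : ∀ x : EuclideanSpace ℝ (Fin n),
        ‖Matrix.toEuclideanLin h.sqrt.conjTranspose x‖
          = ‖Matrix.toEuclideanLin U.conjTranspose x‖ := by
      intro x
      have h1 := normsq_eq h.sqrt x
      have h2 := normsq_eq U x
      rw [hkey] at h1
      have h3 := h1.trans h2.symm
      calc ‖Matrix.toEuclideanLin h.sqrt.conjTranspose x‖
          = Real.sqrt (‖Matrix.toEuclideanLin h.sqrt.conjTranspose x‖ ^ 2) :=
            (Real.sqrt_sq (norm_nonneg _)).symm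
        _ = Real.sqrt (‖Matrix.toEuclideanLin U.conjTranspose x‖ ^ 2) := by rw [h3]
        _ = ‖Matrix.toEuclideanLin U.conjTranspose x‖ := Real.sqrt_sq (norm_nonneg _)
    rw [hK]
    have hkb := key_ball (LinearMap.toContinuousLinearMap (Matrix.toEuclideanLin h.sqrt))
    rw [clm_adjoint_eq] at hkb
    simp only [LinearMap.coe_toContinuousLinearMap', LinearMap.coe_toContinuousLinearMap] at hkb
    rw [← hkb]
    ext y
    simp only [Set.mem_setOf_eq]
    constructor
    · intro hy x
      rw [hnorm x, ← hUHx x]; exact hy x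
    · intro hy x
      rw [hUHx x, ← hnorm x]; exact hy x
  refine ⟨part1, part2, ?_⟩
  have h0 : (U * U.conjTranspose).PosSemidef := Matrix.posSemidef_self_mul_conjTranspose U
  have hK2 := part2 h0
  have hdetlin : LinearMap.det (Matrix.toEuclideanLin h0.sqrt) = h0.sqrt.det := by
    rw [Matrix.toEuclideanLin_eq_toLin_orthonormal]
    exact LinearMap.det_toLin _ _
  rw [hK2, MeasureTheory.Measure.addHaar_image_linearMap, hdetlin, ENNReal.toReal_mul,
    ENNReal.toReal_ofReal (abs_nonneg _)]
  have hd2 : h0.sqrt.det ^ 2 = (U * U.conjTranspose).det := by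
    calc h0.sqrt.det ^ 2 = (h0.sqrt * h0.sqrt).det := by rw [Matrix.det_mul, sq]
      _ = (U * U.conjTranspose).det := congrArg Matrix.det (psd_sqrt_mul_self h0)
  have hcb := cauchyBinet U U.conjTranspose
  have hsub : ∀ I : {s : Finset (Fin m) // s.card = n},
      (U.conjTranspose.submatrix (fun j : Fin n => ((I.1.orderIsoOfFin I.2) j : Fin m)) id).det
        = (U.submatrix id (fun j : Fin n => ((I.1.orderIsoOfFin I.2) j : Fin m))).det := by
    intro I
    have heq : U.conjTranspose.submatrix
          (fun j : Fin n => ((I.1.orderIsoOfFin I.2) j : Fin m)) id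
        = (U.submatrix id (fun j : Fin n => ((I.1.orderIsoOfFin I.2) j : Fin m))).transpose := by
      ext i j
      simp [Matrix.conjTranspose_apply]
    rw [heq, Matrix.det_transpose]
  have hsum : (U * U.conjTranspose).det
      = ∑ I : {s : Finset (Fin m) // s.card = n},
          (U.submatrix id (fun j : Fin n => ((I.1.orderIsoOfFin I.2) j : Fin m))).det ^ 2 := by
    rw [hcb]
    refine Fintype.sum_congr _ _ fun I => ?_
    rw [hsub I, sq]
  rw [mul_pow, sq_abs, hd2, hsum]
  ring
end

section
/- Let A = T₁B₂ⁿ and B = T₂B₂ⁿ be ellipsoids (T₁, T₂ positive definite) and u ∈ S^{n-1}. Then (|A ⊕₂ B| / |P_{u^⊥}(A ⊕₂ B)|)² ≥ (|A| / |P_{u^⊥}A|)² + (|B| / |P_{u^⊥}B|)². -/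
open MeasureTheory
open scoped RealInnerProductSpace
open scoped MatrixOrder

/-- Support function of a set. -/
noncomputable def suppFn {n : ℕ} (K : Set (EuclideanSpace ℝ (Fin n)))
    (x : EuclideanSpace ℝ (Fin n)) : ℝ :=
  sSup ((fun y => ⟪x, y⟫) '' K)

/-- The `ℓ₂`-sum `K ⊕₂ L`: the convex body with support function `√(h_K² + h_L²)`. -/
noncomputable def l2Sum {n : ℕ} (K L : Set (EuclideanSpace ℝ (Fin n))) :
    Set (EuclideanSpace ℝ (Fin n)) :=
  {y | ∀ x : EuclideanSpace ℝ (Fin n), ⟪x, y⟫ ≤ Real.sqrt (suppFn K x ^ 2 + suppFn L x ^ 2)}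

section Helpers
open Matrix

variable {k m l : ℕ}

lemma toEL_mul_apply (A : Matrix (Fin m) (Fin k) ℝ) (B : Matrix (Fin k) (Fin l) ℝ)
    (x : EuclideanSpace ℝ (Fin l)) :
    toEuclideanLin (A * B) x = toEuclideanLin A (toEuclideanLin B x) := by
  simp [Matrix.toEuclideanLin_apply, Matrix.mulVec_mulVec]

lemma toEL_one (x : EuclideanSpace ℝ (Fin k)) :
    toEuclideanLin (1 : Matrix (Fin k) (Fin k) ℝ) x = x := by
  simp [Matrix.toEuclideanLin_apply]

lemma inner_toEL (N : Matrix (Fin m) (Fin k) ℝ) (x : EuclideanSpace ℝ (Fin m))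
    (y : EuclideanSpace ℝ (Fin k)) :
    ⟪x, toEuclideanLin N y⟫ = ⟪toEuclideanLin Nᵀ x, y⟫ := by
  rw [← Matrix.conjTranspose_eq_transpose_of_trivial,
    Matrix.toEuclideanLin_conjTranspose_eq_adjoint, LinearMap.adjoint_inner_left]

lemma sSup_inner_closedBall (v : EuclideanSpace ℝ (Fin k)) :
    sSup ((fun y => ⟪v, y⟫) '' Metric.closedBall 0 1) = ‖v‖ := by
  apply IsGreatest.csSup_eq
  constructor
  · rcases eq_or_ne v 0 with rfl | hv
    · exact ⟨0, Metric.mem_closedBall_self (by norm_num), by simp⟩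
    · refine ⟨‖v‖⁻¹ • v, ?_, ?_⟩
      · simp only [Metric.mem_closedBall, dist_zero_right, norm_smul, norm_inv, norm_norm]
        rw [inv_mul_cancel₀ (norm_ne_zero_iff.2 hv)]
      · show ⟪v, ‖v‖⁻¹ • v⟫ = ‖v‖
        rw [real_inner_smul_right, real_inner_self_eq_norm_sq]
        field_simp [norm_ne_zero_iff.2 hv]
  · rintro a ⟨y, hy, rfl⟩
    calc ⟪v, y⟫ ≤ ‖v‖ * ‖y‖ := real_inner_le_norm v y
    _ ≤ ‖v‖ * 1 := by
        have : ‖y‖ ≤ 1 := by simpa [dist_zero_right] using hy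
        exact mul_le_mul_of_nonneg_left this (norm_nonneg v)
    _ = ‖v‖ := mul_one _

lemma inner_eq_dot (x y : EuclideanSpace ℝ (Fin k)) :
    ⟪x, y⟫ = (WithLp.equiv 2 _ x) ⬝ᵥ (WithLp.equiv 2 _ y) := by
  simp [PiLp.inner_apply, RCLike.inner_apply, dotProduct, mul_comm]

lemma inner_quad (N : Matrix (Fin m) (Fin k) ℝ) (z : EuclideanSpace ℝ (Fin m)) :
    Real.sqrt ⟪z, toEuclideanLin (N * Nᵀ) z⟫ = ‖toEuclideanLin Nᵀ z‖ := by
  rw [toEL_mul_apply, inner_toEL, real_inner_self_eq_norm_sq]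
  exact Real.sqrt_sq (norm_nonneg _)

lemma image_ball_eq (N : Matrix (Fin m) (Fin k) ℝ) (h : (N * Nᵀ).PosDef) :
    (⇑(toEuclideanLin N) '' Metric.closedBall 0 1) =
      {y : EuclideanSpace ℝ (Fin m) |
        ∀ z : EuclideanSpace ℝ (Fin m), ⟪z, y⟫ ≤ Real.sqrt ⟪z, toEuclideanLin (N * Nᵀ) z⟫} := by
  have hinv : (N * Nᵀ) * (N * Nᵀ)⁻¹ = 1 := Matrix.mul_nonsing_inv _ h.det_pos.ne'.isUnit
  ext y
  constructor
  · rintro ⟨x, hx, rfl⟩ z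
    rw [inner_quad, inner_toEL]
    calc ⟪toEuclideanLin Nᵀ z, x⟫ ≤ ‖toEuclideanLin Nᵀ z‖ * ‖x‖ := real_inner_le_norm _ _
    _ ≤ ‖toEuclideanLin Nᵀ z‖ * 1 := by
        have : ‖x‖ ≤ 1 := by simpa [dist_zero_right] using hx
        exact mul_le_mul_of_nonneg_left this (norm_nonneg _)
    _ = _ := mul_one _
  · intro hy
    set w := toEuclideanLin (N * Nᵀ)⁻¹ y with hw
    set x := toEuclideanLin Nᵀ w with hxdef
    have hNx : toEuclideanLin N x = y := by
      rw [hxdef, hw, ← toEL_mul_apply, ← toEL_mul_apply, hinv]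
      simp [Matrix.toEuclideanLin_apply]
    have hwy : ⟪w, y⟫ = ‖x‖ ^ 2 := by
      conv_lhs => rw [← hNx]
      rw [inner_toEL, real_inner_self_eq_norm_sq]
    have hle : ⟪w, y⟫ ≤ ‖x‖ := by
      have := hy w
      rwa [inner_quad, ← hxdef] at this
    have hx1 : ‖x‖ ≤ 1 := by nlinarith [norm_nonneg x, hwy ▸ hle]
    exact ⟨x, by simpa [dist_zero_right] using hx1, hNx⟩

lemma det_toEL (W : Matrix (Fin m) (Fin m) ℝ) :
    LinearMap.det (Matrix.toEuclideanLin W) = W.det := by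
  rw [Matrix.toEuclideanLin_eq_toLin, LinearMap.det_toLin]

lemma volume_image_ball (N : Matrix (Fin m) (Fin k) ℝ) (h : (N * Nᵀ).PosDef) :
    volume (⇑(toEuclideanLin N) '' Metric.closedBall 0 1) =
      ENNReal.ofReal (Real.sqrt (N * Nᵀ).det) *
        volume (Metric.closedBall (0 : EuclideanSpace ℝ (Fin m)) 1) := by
  set W := CFC.sqrt (N * Nᵀ) with hWdef
  have hWherm : Wᵀ = W := by
    have := (CFC.sqrt_nonneg (N * Nᵀ)).posSemidef.1
    rwa [Matrix.IsHermitian, Matrix.conjTranspose_eq_transpose_of_trivial] at this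
  have hWW : W * Wᵀ = N * Nᵀ := by rw [hWherm, CFC.sqrt_mul_sqrt_self (N * Nᵀ) h.posSemidef.nonneg]
  have hP : (W * Wᵀ).PosDef := by rw [hWW]; exact h
  have him : ⇑(toEuclideanLin N) '' Metric.closedBall 0 1
      = ⇑(toEuclideanLin W) '' Metric.closedBall 0 1 := by
    rw [image_ball_eq N h, image_ball_eq W hP, hWW]
  rw [him, MeasureTheory.Measure.addHaar_image_linearMap]
  have hWpd : W.PosDef := by
    refine Matrix.posDef_iff_dotProduct_mulVec.mpr ⟨(CFC.sqrt_nonneg (N * Nᵀ)).posSemidef.1, @fun x hx => ?_⟩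
    rcases ((CFC.sqrt_nonneg (N * Nᵀ)).posSemidef.dotProduct_mulVec_nonneg x).lt_or_eq with hlt | heq
    · exact hlt
    · exfalso
      have hWx : W *ᵥ x = 0 :=
        ((CFC.sqrt_nonneg (N * Nᵀ)).posSemidef.dotProduct_mulVec_zero_iff x).mp heq.symm
      have hAx : (N * Nᵀ) *ᵥ x = 0 := by
        rw [← CFC.sqrt_mul_sqrt_self (N * Nᵀ) h.posSemidef.nonneg, ← hWdef, ← Matrix.mulVec_mulVec, hWx,
          Matrix.mulVec_zero]
      have := h.dotProduct_mulVec_pos hx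
      rw [hAx, dotProduct_zero] at this
      exact lt_irrefl 0 this
  have h0 : 0 ≤ W.det := hWpd.det_pos.le
  have hsq : W.det ^ 2 = (N * Nᵀ).det := by
    rw [← hWW, pow_two, ← Matrix.det_mul, hWherm]
  rw [det_toEL, abs_of_nonneg h0, ← hsq, Real.sqrt_sq h0]

lemma det_proj_aux (m : ℕ) (R : Matrix (Fin m) (Fin (m+1)) ℝ) (u : Fin (m+1) → ℝ)
    (M : Matrix (Fin (m+1)) (Fin (m+1)) ℝ) (hM : IsUnit M.det)
    (hRRT : R * Rᵀ = 1) (hRu : R *ᵥ u = 0) (huu : u ⬝ᵥ u = 1) :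
    (R * M * Rᵀ).det = M.det * (u ⬝ᵥ (M⁻¹ *ᵥ u)) := by
  classical
  set ur : Matrix (Fin 1) (Fin (m+1)) ℝ := Matrix.replicateRow (Fin 1) u with hur
  set O : Matrix (Fin m ⊕ Fin 1) (Fin (m+1)) ℝ := Matrix.fromRows R ur with hO
  have h1 : R * urᵀ = 0 := by
    ext i j
    have := congrFun hRu i
    simpa [hur, Matrix.mul_apply, Matrix.replicateRow_apply, Matrix.mulVec, dotProduct] using this
  have h2 : ur * Rᵀ = 0 := by
    ext i j
    have := congrFun hRu j
    simpa [hur, Matrix.mul_apply, Matrix.replicateRow_apply, Matrix.mulVec, dotProduct, mul_comm] using this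
  have h3 : ur * urᵀ = 1 := by
    ext i j
    have : (i : Fin 1) = j := Subsingleton.elim i j
    subst this
    simpa [hur, Matrix.mul_apply, Matrix.replicateRow_apply, dotProduct] using huu
  have hOOT : O * Oᵀ = 1 := by
    rw [hO, Matrix.transpose_fromRows, Matrix.fromRows_mul_fromCols, hRRT, h1, h2, h3,
      Matrix.fromBlocks_one]
  have e : Fin m ⊕ Fin 1 ≃ Fin (m + 1) := finSumFinEquiv
  have hOTO : Oᵀ * O = 1 := (Matrix.mul_eq_one_comm_of_equiv e).mp hOOT
  have hdetconj : ∀ M' : Matrix (Fin (m+1)) (Fin (m+1)) ℝ, (O * M' * Oᵀ).det = M'.det := by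
    intro M'
    have hs1 : O.submatrix id ⇑e * M'.submatrix ⇑e ⇑e = (O * M').submatrix id ⇑e :=
      Matrix.submatrix_mul_equiv O M' id e ⇑e
    have hs2 : (O * M').submatrix id ⇑e * Oᵀ.submatrix ⇑e id = (O * M' * Oᵀ).submatrix id id :=
      Matrix.submatrix_mul_equiv (O * M') Oᵀ id e id
    have hs3 : O.submatrix id ⇑e * Oᵀ.submatrix ⇑e id = (O * Oᵀ).submatrix id id :=
      Matrix.submatrix_mul_equiv O Oᵀ id e id
    have hOs : (O.submatrix id ⇑e).det * (Oᵀ.submatrix ⇑e id).det = 1 := by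
      rw [← Matrix.det_mul, hs3, Matrix.submatrix_id_id, hOOT, Matrix.det_one]
    calc (O * M' * Oᵀ).det = ((O * M' * Oᵀ).submatrix id id).det := by
          rw [Matrix.submatrix_id_id]
    _ = (O.submatrix id ⇑e * M'.submatrix ⇑e ⇑e * Oᵀ.submatrix ⇑e id).det := by
          rw [hs1, hs2]
    _ = (O.submatrix id ⇑e).det * (M'.submatrix ⇑e ⇑e).det * (Oᵀ.submatrix ⇑e id).det := by
          rw [Matrix.det_mul, Matrix.det_mul]
    _ = (O.submatrix id ⇑e).det * (Oᵀ.submatrix ⇑e id).det * M'.det := by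
          rw [Matrix.det_submatrix_equiv_self]; ring
    _ = M'.det := by rw [hOs, one_mul]
  set X : Matrix (Fin m ⊕ Fin 1) (Fin m ⊕ Fin 1) ℝ := O * M * Oᵀ with hX
  have hXdet : X.det = M.det := hdetconj M
  have hXinv : X⁻¹ = O * M⁻¹ * Oᵀ := by
    apply Matrix.inv_eq_right_inv
    have hmid : Oᵀ * (O * (M⁻¹ * Oᵀ)) = M⁻¹ * Oᵀ := by
      rw [← Matrix.mul_assoc, hOTO, Matrix.one_mul]
    rw [hX]
    simp only [Matrix.mul_assoc]
    rw [hmid, ← Matrix.mul_assoc M, Matrix.mul_nonsing_inv _ hM, Matrix.one_mul, hOOT]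
  have hfromX : X = Matrix.fromBlocks (R * M * Rᵀ) (R * M * urᵀ) (ur * M * Rᵀ) (ur * M * urᵀ) := by
    rw [hX, hO, Matrix.transpose_fromRows, Matrix.fromRows_mul, Matrix.fromRows_mul_fromCols]
  have hfromY : O * M⁻¹ * Oᵀ =
      Matrix.fromBlocks (R * M⁻¹ * Rᵀ) (R * M⁻¹ * urᵀ) (ur * M⁻¹ * Rᵀ) (ur * M⁻¹ * urᵀ) := by
    rw [hO, Matrix.transpose_fromRows, Matrix.fromRows_mul, Matrix.fromRows_mul_fromCols]
  have hentryY : (O * M⁻¹ * Oᵀ) (Sum.inr 0) (Sum.inr 0) = u ⬝ᵥ (M⁻¹ *ᵥ u) := by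
    rw [hfromY]
    show (ur * M⁻¹ * urᵀ) 0 0 = u ⬝ᵥ (M⁻¹ *ᵥ u)
    simp only [Matrix.mul_apply, Matrix.transpose_apply, Matrix.replicateRow_apply, hur, dotProduct,
      Matrix.mulVec, Finset.sum_mul, Finset.mul_sum]
    rw [Finset.sum_comm]
    apply Finset.sum_congr rfl; intro j _
    apply Finset.sum_congr rfl; intro i _
    ring
  have hupd : X.updateRow (Sum.inr 0) (Pi.single (Sum.inr 0) 1) =
      Matrix.fromBlocks (R * M * Rᵀ) (R * M * urᵀ) 0 1 := by
    rw [hfromX]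
    ext i j
    rcases i with i | i
    · rw [Matrix.updateRow_ne (by simp)]
      rfl
    · have hi : i = 0 := Subsingleton.elim i 0
      subst hi
      rw [Matrix.updateRow_self]
      rcases j with j | j
      · simp [Pi.single, Function.update, Matrix.fromBlocks]
      · have hj : j = 0 := Subsingleton.elim j 0
        subst hj
        simp [Pi.single, Function.update, Matrix.fromBlocks]
  have hadj : X.adjugate (Sum.inr 0) (Sum.inr 0) = (R * M * Rᵀ).det := by
    rw [Matrix.adjugate_apply, hupd, Matrix.det_fromBlocks_zero₂₁, Matrix.det_one, mul_one]
  have hentryX : X⁻¹ (Sum.inr 0) (Sum.inr 0) = M.det⁻¹ * (R * M * Rᵀ).det := by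
    rw [Matrix.inv_def, Matrix.smul_apply, hadj, hXdet, Ring.inverse_eq_inv', smul_eq_mul]
  have hfinal : u ⬝ᵥ (M⁻¹ *ᵥ u) = M.det⁻¹ * (R * M * Rᵀ).det := by
    rw [← hentryY, ← hXinv, hentryX]
  rw [hfinal, ← mul_assoc, mul_inv_cancel₀ hM.ne_zero, one_mul]

lemma posDef_mul_mul_transpose {a b : ℕ} {M : Matrix (Fin b) (Fin b) ℝ} (hM : M.PosDef)
    (R : Matrix (Fin a) (Fin b) ℝ) (hR : ∀ x : Fin a → ℝ, Rᵀ *ᵥ x = 0 → x = 0) :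
    (R * M * Rᵀ).PosDef := by
  have hMt : Mᵀ = M := by
    have := hM.1
    rwa [Matrix.IsHermitian, Matrix.conjTranspose_eq_transpose_of_trivial] at this
  rw [Matrix.posDef_iff_dotProduct_mulVec]
  constructor
  · show (R * M * Rᵀ)ᴴ = R * M * Rᵀ
    rw [Matrix.conjTranspose_eq_transpose_of_trivial, Matrix.transpose_mul, Matrix.transpose_mul,
      Matrix.transpose_transpose, hMt, Matrix.mul_assoc]
  · intro x hx
    have key : star x ⬝ᵥ (R * M * Rᵀ) *ᵥ x = star (Rᵀ *ᵥ x) ⬝ᵥ (M *ᵥ (Rᵀ *ᵥ x)) := by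
      rw [star_trivial, star_trivial, ← Matrix.mulVec_mulVec, ← Matrix.mulVec_mulVec,
        Matrix.dotProduct_mulVec, ← Matrix.transpose_transpose R, Matrix.vecMul_transpose,
        Matrix.transpose_transpose]
    rw [key]
    exact hM.dotProduct_mulVec_pos (fun h0 => hx (hR x h0))

lemma posDef_self_mul_transpose {b : ℕ} {T : Matrix (Fin b) (Fin b) ℝ} (hT : IsUnit T.det) :
    (T * Tᵀ).PosDef := by
  have h1 : (T * 1 * Tᵀ).PosDef := by
    apply posDef_mul_mul_transpose Matrix.PosDef.one
    intro x hx
    have : (Tᵀ)⁻¹ *ᵥ (Tᵀ *ᵥ x) = x := by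
      rw [Matrix.mulVec_mulVec, Matrix.nonsing_inv_mul _ (by rwa [Matrix.det_transpose]),
        Matrix.one_mulVec]
    rw [← this, hx, Matrix.mulVec_zero]
  rwa [Matrix.mul_one] at h1

lemma inner_posDef {b : ℕ} {M : Matrix (Fin b) (Fin b) ℝ} (hM : M.PosDef)
    {x : EuclideanSpace ℝ (Fin b)} (hx : x ≠ 0) : 0 < ⟪x, toEuclideanLin M x⟫ := by
  have h := hM.dotProduct_mulVec_pos (x := WithLp.equiv 2 _ x) (by simpa using hx)
  rw [star_trivial] at h
  rw [PiLp.inner_apply]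
  convert h using 1
  · rfl
  · simp [RCLike.inner_apply, dotProduct, Matrix.toEuclideanLin_apply, mul_comm]

lemma key_CS {b : ℕ} {M : Matrix (Fin b) (Fin b) ℝ} (hM : M.PosDef)
    (w u : EuclideanSpace ℝ (Fin b)) (hwu : ⟪w, u⟫ = 1) :
    1 ≤ ⟪w, toEuclideanLin M w⟫ * ⟪u, toEuclideanLin M⁻¹ u⟫ := by
  set W := CFC.sqrt M with hWdef
  have hWt : Wᵀ = W := by
    have := (CFC.sqrt_nonneg M).posSemidef.1
    rwa [Matrix.IsHermitian, Matrix.conjTranspose_eq_transpose_of_trivial] at this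
  have hWW : W * W = M := CFC.sqrt_mul_sqrt_self M hM.posSemidef.nonneg
  set v := toEuclideanLin M⁻¹ u with hv
  have hMv : toEuclideanLin M v = u := by
    rw [← toEL_mul_apply, Matrix.mul_nonsing_inv _ hM.det_pos.ne'.isUnit]
    simp [Matrix.toEuclideanLin_apply]
  have h1 : (1:ℝ) = ⟪toEuclideanLin W w, toEuclideanLin W v⟫ := by
    rw [← hwu, ← hMv, ← hWW, toEL_mul_apply]
    rw [inner_toEL, hWt]
  have hWw : ‖toEuclideanLin W w‖ ^ 2 = ⟪w, toEuclideanLin M w⟫ := by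
    rw [← real_inner_self_eq_norm_sq, inner_toEL, hWt, ← toEL_mul_apply, hWW, real_inner_comm]
  have hWv : ‖toEuclideanLin W v‖ ^ 2 = ⟪u, toEuclideanLin M⁻¹ u⟫ := by
    rw [← real_inner_self_eq_norm_sq, inner_toEL, hWt, ← toEL_mul_apply, hWW, hMv, hv,
      real_inner_comm]
  have hCS : (1:ℝ) ≤ ‖toEuclideanLin W w‖ * ‖toEuclideanLin W v‖ := by
    rw [h1]; exact real_inner_le_norm _ _
  nlinarith [norm_nonneg (toEuclideanLin W w), norm_nonneg (toEuclideanLin W v)]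

lemma superadd {b : ℕ} {M₁ M₂ : Matrix (Fin b) (Fin b) ℝ} (h₁ : M₁.PosDef) (h₂ : M₂.PosDef)
    (u : EuclideanSpace ℝ (Fin b)) (hu : u ≠ 0) :
    1 / ⟪u, toEuclideanLin M₁⁻¹ u⟫ + 1 / ⟪u, toEuclideanLin M₂⁻¹ u⟫ ≤
      1 / ⟪u, toEuclideanLin (M₁ + M₂)⁻¹ u⟫ := by
  have h0 : (M₁ + M₂).PosDef := h₁.add h₂
  have hs₁ : 0 < ⟪u, toEuclideanLin M₁⁻¹ u⟫ := inner_posDef h₁.inv hu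
  have hs₂ : 0 < ⟪u, toEuclideanLin M₂⁻¹ u⟫ := inner_posDef h₂.inv hu
  have hs₀ : 0 < ⟪u, toEuclideanLin (M₁ + M₂)⁻¹ u⟫ := inner_posDef h0.inv hu
  set s₀ := ⟪u, toEuclideanLin (M₁ + M₂)⁻¹ u⟫ with hs0def
  set x₀ := toEuclideanLin (M₁ + M₂)⁻¹ u with hx0
  set w := s₀⁻¹ • x₀ with hwdef
  have hwu : ⟪w, u⟫ = 1 := by
    rw [hwdef, real_inner_smul_left, real_inner_comm, ← hs0def, inv_mul_cancel₀ hs₀.ne']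
  have hMx₀ : toEuclideanLin (M₁ + M₂) x₀ = u := by
    rw [← toEL_mul_apply, Matrix.mul_nonsing_inv _ h0.det_pos.ne'.isUnit]
    simp [Matrix.toEuclideanLin_apply]
  have hsplit : toEuclideanLin (M₁ + M₂) w = toEuclideanLin M₁ w + toEuclideanLin M₂ w := by
    rw [map_add]; rfl
  have hELw : toEuclideanLin (M₁ + M₂) w = s₀⁻¹ • u := by
    rw [hwdef, _root_.map_smul, hMx₀]
  have h' : ⟪w, toEuclideanLin M₁ w⟫ + ⟪w, toEuclideanLin M₂ w⟫ = s₀⁻¹ := by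
    rw [← inner_add_right, ← hsplit, hELw, real_inner_smul_right, hwu, mul_one]
  have k₁ := key_CS h₁ w u hwu
  have k₂ := key_CS h₂ w u hwu
  have hq₁ : 1 / ⟪u, toEuclideanLin M₁⁻¹ u⟫ ≤ ⟪w, toEuclideanLin M₁ w⟫ := by
    rw [div_le_iff₀ hs₁]; linarith
  have hq₂ : 1 / ⟪u, toEuclideanLin M₂⁻¹ u⟫ ≤ ⟪w, toEuclideanLin M₂ w⟫ := by
    rw [div_le_iff₀ hs₂]; linarith
  have e1 : (1:ℝ) / s₀ = s₀⁻¹ := one_div _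
  linarith

lemma suppFn_image (T : Matrix (Fin k) (Fin k) ℝ) (x : EuclideanSpace ℝ (Fin k)) :
    suppFn (⇑(toEuclideanLin T) '' Metric.closedBall 0 1) x = ‖toEuclideanLin Tᵀ x‖ := by
  unfold suppFn
  have : ((fun y => ⟪x, y⟫) '' (⇑(toEuclideanLin T) '' Metric.closedBall 0 1)) =
      ((fun y => ⟪toEuclideanLin Tᵀ x, y⟫) '' Metric.closedBall 0 1) := by
    rw [← Set.image_comp]
    apply Set.image_congr
    intro y _
    exact inner_toEL T x y
  rw [this, sSup_inner_closedBall]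

end Helpers
open Matrix in
set_option maxHeartbeats 2000000 in
/-- For ellipsoids `A = T₁B₂ⁿ`, `B = T₂B₂ⁿ` (`T₁, T₂` positive definite) and `u ∈ Sⁿ⁻¹`:
`(|A⊕₂B| / |P_{u⊥}(A⊕₂B)|)² ≥ (|A| / |P_{u⊥}A|)² + (|B| / |P_{u⊥}B|)²`. -/
theorem ellipsoid_l2_sum_proj_ineq (n : ℕ)
    (T₁ T₂ : Matrix (Fin n) (Fin n) ℝ) (hT₁ : T₁.PosDef) (hT₂ : T₂.PosDef)
    (u : EuclideanSpace ℝ (Fin n)) (hu : ‖u‖ = 1)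
    (A B : Set (EuclideanSpace ℝ (Fin n)))
    (hA : A = (Matrix.toEuclideanLin T₁) '' Metric.closedBall 0 1)
    (hB : B = (Matrix.toEuclideanLin T₂) '' Metric.closedBall 0 1) :
    ((volume (l2Sum A B)).toReal /
          (volume ((Submodule.orthogonalProjection ((Submodule.span ℝ {u})ᗮ)) '' l2Sum A B)).toReal) ^ 2 ≥
      ((volume A).toReal /
          (volume ((Submodule.orthogonalProjection ((Submodule.span ℝ {u})ᗮ)) '' A)).toReal) ^ 2 +
        ((volume B).toReal /
          (volume ((Submodule.orthogonalProjection ((Submodule.span ℝ {u})ᗮ)) '' B)).toReal) ^ 2 := by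
  obtain ⟨m, rfl⟩ : ∃ m, n = m + 1 := by
    cases n with
    | zero =>
        exfalso
        have h0 : (u : EuclideanSpace ℝ (Fin 0)) = 0 := Subsingleton.elim u 0
        rw [h0, norm_zero] at hu; norm_num at hu
    | succ m => exact ⟨m, rfl⟩
  have hu0 : u ≠ 0 := by intro h; rw [h, norm_zero] at hu; norm_num at hu
  set H : Submodule ℝ (EuclideanSpace ℝ (Fin (m+1))) := (Submodule.span ℝ {u})ᗮ with hH
  have hfr : Module.finrank ℝ H = m := by
    have h1 := Submodule.finrank_add_finrank_orthogonal (Submodule.span ℝ ({u} :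
      Set (EuclideanSpace ℝ (Fin (m+1)))))
    rw [finrank_span_singleton hu0, finrank_euclideanSpace_fin] at h1
    rw [hH]
    omega
  set b : OrthonormalBasis (Fin m) ℝ H := (stdOrthonormalBasis ℝ H).reindex (finCongr hfr) with hb
  set π : EuclideanSpace ℝ (Fin (m+1)) →ₗ[ℝ] EuclideanSpace ℝ (Fin m) :=
    (b.repr.toLinearEquiv.toLinearMap) ∘ₗ (Submodule.orthogonalProjection H).toLinearMap with hπ
  set R : Matrix (Fin m) (Fin (m+1)) ℝ := Matrix.toEuclideanLin.symm π with hRdef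
  have hRπ : ⇑(toEuclideanLin R) = ⇑π := by rw [hRdef, LinearEquiv.apply_symm_apply]
  set ι : EuclideanSpace ℝ (Fin m) →ₗ[ℝ] EuclideanSpace ℝ (Fin (m+1)) :=
    H.subtype ∘ₗ b.repr.symm.toLinearEquiv.toLinearMap with hι
  have hadj : ι = LinearMap.adjoint π := by
    rw [LinearMap.eq_adjoint_iff]
    intro x y
    show ⟪((b.repr.symm x : H) : EuclideanSpace ℝ (Fin (m+1))), y⟫
      = ⟪x, b.repr (Submodule.orthogonalProjection H y)⟫
    rw [← LinearIsometryEquiv.inner_map_map b.repr.symm x (b.repr (Submodule.orthogonalProjection H y)),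
      LinearIsometryEquiv.symm_apply_apply]
    exact (Submodule.inner_orthogonalProjection_eq_of_mem_left (K := H) (b.repr.symm x) y).symm
  have hπι : ∀ x, π (ι x) = x := by
    intro x
    show b.repr (Submodule.orthogonalProjection H ((b.repr.symm x : H) : EuclideanSpace ℝ (Fin (m+1)))) = x
    rw [Submodule.orthogonalProjection_mem_subspace_eq_self, LinearIsometryEquiv.apply_symm_apply]
  have hRT : ⇑(toEuclideanLin Rᵀ) = ⇑ι := by
    rw [← Matrix.conjTranspose_eq_transpose_of_trivial,
      Matrix.toEuclideanLin_conjTranspose_eq_adjoint, hRdef, LinearEquiv.apply_symm_apply, ← hadj]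
  have hRRT : R * Rᵀ = 1 := by
    apply Matrix.toEuclideanLin.injective
    apply LinearMap.ext; intro x
    calc toEuclideanLin (R * Rᵀ) x = toEuclideanLin R (toEuclideanLin Rᵀ x) :=
          toEL_mul_apply R Rᵀ x
    _ = π (ι x) := by rw [congrFun hRT x, congrFun hRπ (ι x)]
    _ = x := hπι x
    _ = toEuclideanLin 1 x := (toEL_one x).symm
  have hπu : π u = 0 := by
    show b.repr (Submodule.orthogonalProjection H u) = 0
    rw [Submodule.orthogonalProjectionOnto_apply_of_mem_orthogonal, map_zero]
    exact Submodule.le_orthogonal_orthogonal _ (Submodule.mem_span_singleton_self u)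
  -- transported projection volume
  have hproj_vol : ∀ s : Set (EuclideanSpace ℝ (Fin (m+1))), IsCompact s →
      volume (⇑(Submodule.orthogonalProjection H) '' s) = volume (⇑π '' s) := by
    intro s hs
    have ht : MeasurableSet (⇑(Submodule.orthogonalProjection H) '' s) :=
      (hs.image (Submodule.orthogonalProjection H).continuous).measurableSet
    have himg : ⇑π '' s = ⇑(b.repr) '' (⇑(Submodule.orthogonalProjection H) '' s) := by
      rw [← Set.image_comp]; rfl
    have hpre : Set.image ⇑(b.repr) = Set.preimage ⇑(b.repr.symm) :=
      Set.image_eq_preimage_of_inverse (fun x => by simp) (fun x => by simp)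
    rw [himg, hpre, (b.measurePreserving_repr_symm).measure_preimage ht.nullMeasurableSet]
  -- mulVec facts about u
  set u' : Fin (m+1) → ℝ := WithLp.equiv 2 _ u with hu'
  have hRu : R *ᵥ u' = 0 := by
    have h0 : toEuclideanLin R u = 0 := by rw [congrFun hRπ u]; exact hπu
    have := congrArg (WithLp.equiv 2 (Fin m → ℝ)) h0
    simpa [Matrix.ofLp_toEuclideanLin_apply, hu'] using this
  have huu : u' ⬝ᵥ u' = 1 := by
    have h1 : ⟪u, u⟫ = 1 := by
      rw [real_inner_self_eq_norm_sq, hu]; norm_num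
    rw [← inner_eq_dot] at *
    exact h1
  -- volumes of balls
  set ωn := volume (Metric.closedBall (0 : EuclideanSpace ℝ (Fin (m+1))) 1) with hωn
  set ωm := volume (Metric.closedBall (0 : EuclideanSpace ℝ (Fin m)) 1) with hωm
  have hωn_fin : ωn ≠ ⊤ := (isCompact_closedBall _ _).measure_lt_top.ne
  have hωm_fin : ωm ≠ ⊤ := (isCompact_closedBall _ _).measure_lt_top.ne
  have hωm_pos : 0 < ωm := by
    refine lt_of_lt_of_le ?_ (measure_mono Metric.ball_subset_closedBall)
    exact Metric.isOpen_ball.measure_pos volume ⟨0, Metric.mem_ball_self one_pos⟩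
  have hωn_pos : 0 < ωn := by
    refine lt_of_lt_of_le ?_ (measure_mono Metric.ball_subset_closedBall)
    exact Metric.isOpen_ball.measure_pos volume ⟨0, Metric.mem_ball_self one_pos⟩
  -- the master computation for one ellipsoid body
  have master : ∀ T : Matrix (Fin (m+1)) (Fin (m+1)) ℝ, (T * Tᵀ).PosDef →
      ((volume (⇑(toEuclideanLin T) '' Metric.closedBall 0 1)).toReal /
        (volume (⇑(Submodule.orthogonalProjection H) '' (⇑(toEuclideanLin T) '' Metric.closedBall 0 1))).toReal) ^ 2
      = (ωn.toReal ^ 2 / ωm.toReal ^ 2) / ⟪u, toEuclideanLin (T * Tᵀ)⁻¹ u⟫ := by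
    intro T hTT
    set M := T * Tᵀ with hM
    have hRinj : ∀ x : Fin m → ℝ, Rᵀ *ᵥ x = 0 → x = 0 := by
      intro x hx
      have : (R * Rᵀ) *ᵥ x = x := by rw [hRRT, Matrix.one_mulVec]
      rw [← this, ← Matrix.mulVec_mulVec, hx, Matrix.mulVec_zero]
    have hRMRT : (R * M * Rᵀ).PosDef := posDef_mul_mul_transpose hTT R hRinj
    have hEq : (R * T) * (R * T)ᵀ = R * M * Rᵀ := by
      rw [hM, Matrix.transpose_mul]
      simp only [Matrix.mul_assoc]
    have hRTpos : ((R * T) * (R * T)ᵀ).PosDef := by rw [hEq]; exact hRMRT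
    have hcomp : IsCompact (⇑(toEuclideanLin T) '' Metric.closedBall 0 1) :=
      (isCompact_closedBall _ _).image (LinearMap.continuous_of_finiteDimensional _)
    -- projection image
    have hproj_img : ⇑π '' (⇑(toEuclideanLin T) '' Metric.closedBall 0 1)
        = ⇑(toEuclideanLin (R * T)) '' Metric.closedBall 0 1 := by
      rw [← Set.image_comp]
      apply Set.image_congr
      intro y _
      show π (toEuclideanLin T y) = toEuclideanLin (R * T) y
      rw [toEL_mul_apply, congrFun hRπ (toEuclideanLin T y)]
    -- volumes
    have hvol1 : volume (⇑(toEuclideanLin T) '' Metric.closedBall 0 1)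
        = ENNReal.ofReal (Real.sqrt M.det) * ωn := volume_image_ball T hTT
    have hvol2 : volume (⇑(Submodule.orthogonalProjection H) '' (⇑(toEuclideanLin T) '' Metric.closedBall 0 1))
        = ENNReal.ofReal (Real.sqrt ((R * T) * (R * T)ᵀ).det) * ωm := by
      rw [hproj_vol _ hcomp, hproj_img, volume_image_ball _ hRTpos]
    -- determinant identity
    have hdet : ((R * T) * (R * T)ᵀ).det = M.det * ⟪u, toEuclideanLin M⁻¹ u⟫ := by
      have h2 : ⟪u, toEuclideanLin M⁻¹ u⟫ = u' ⬝ᵥ (M⁻¹ *ᵥ u') := by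
        rw [inner_eq_dot]
        congr 1
      rw [hEq, h2, det_proj_aux m R u' M hTT.det_pos.ne'.isUnit hRRT hRu huu]
    -- real computations
    set s := ⟪u, toEuclideanLin M⁻¹ u⟫ with hs
    have hspos : 0 < s := inner_posDef hTT.inv hu0
    have hdpos : 0 < M.det := hTT.det_pos
    rw [hvol1, hvol2, hdet]
    rw [ENNReal.toReal_mul, ENNReal.toReal_mul, ENNReal.toReal_ofReal (Real.sqrt_nonneg _),
      ENNReal.toReal_ofReal (Real.sqrt_nonneg _)]
    rw [div_pow, mul_pow, mul_pow, Real.sq_sqrt hdpos.le,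
      Real.sq_sqrt (mul_nonneg hdpos.le hspos.le)]
    have hωm' : (0:ℝ) < ωm.toReal := ENNReal.toReal_pos hωm_pos.ne' hωm_fin
    field_simp
  -- the three bodies
  have hM₁ : (T₁ * T₁ᵀ).PosDef := posDef_self_mul_transpose hT₁.det_pos.ne'.isUnit
  have hM₂ : (T₂ * T₂ᵀ).PosDef := posDef_self_mul_transpose hT₂.det_pos.ne'.isUnit
  have hM0 : (T₁ * T₁ᵀ + T₂ * T₂ᵀ).PosDef := hM₁.add hM₂
  set S₀ := CFC.sqrt (T₁ * T₁ᵀ + T₂ * T₂ᵀ) with hS0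
  have hS0t : S₀ᵀ = S₀ := by
    have := (CFC.sqrt_nonneg (T₁ * T₁ᵀ + T₂ * T₂ᵀ)).posSemidef.1
    rwa [Matrix.IsHermitian, Matrix.conjTranspose_eq_transpose_of_trivial] at this
  have hSS : S₀ * S₀ᵀ = T₁ * T₁ᵀ + T₂ * T₂ᵀ := by
    rw [hS0t, CFC.sqrt_mul_sqrt_self (T₁ * T₁ᵀ + T₂ * T₂ᵀ) hM0.posSemidef.nonneg]
  have hS0pd : (S₀ * S₀ᵀ).PosDef := by rw [hSS]; exact hM0
  -- quadratic expansion helper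
  have hquad : ∀ (T : Matrix (Fin (m+1)) (Fin (m+1)) ℝ) (x : EuclideanSpace ℝ (Fin (m+1))),
      ⟪x, toEuclideanLin (T * Tᵀ) x⟫ = ‖toEuclideanLin Tᵀ x‖ ^ 2 := by
    intro T x
    rw [toEL_mul_apply, inner_toEL, real_inner_self_eq_norm_sq]
  -- identification of the l2 sum
  have hl2 : l2Sum A B = ⇑(toEuclideanLin S₀) '' Metric.closedBall 0 1 := by
    rw [image_ball_eq S₀ hS0pd]
    unfold l2Sum
    ext y
    simp only [Set.mem_setOf_eq]
    apply forall_congr'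
    intro x
    have hx : suppFn A x ^ 2 + suppFn B x ^ 2 = ⟪x, toEuclideanLin (S₀ * S₀ᵀ) x⟫ := by
      have hsA : suppFn A x = ‖toEuclideanLin T₁ᵀ x‖ := by rw [hA]; exact suppFn_image T₁ x
      have hsB : suppFn B x = ‖toEuclideanLin T₂ᵀ x‖ := by rw [hB]; exact suppFn_image T₂ x
      have hadd : toEuclideanLin (T₁ * T₁ᵀ + T₂ * T₂ᵀ) x
          = toEuclideanLin (T₁ * T₁ᵀ) x + toEuclideanLin (T₂ * T₂ᵀ) x := by
        rw [map_add]; rfl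
      rw [hsA, hsB, hSS, hadd, inner_add_right, hquad T₁ x, hquad T₂ x]
    rw [hx]
  -- apply the master formula
  have h1 := master T₁ hM₁
  have h2 := master T₂ hM₂
  have h0 := master S₀ hS0pd
  rw [← hA] at h1
  rw [← hB] at h2
  rw [← hl2] at h0
  rw [h0, h1, h2, hSS]
  -- superadditivity
  have hsup := superadd hM₁ hM₂ u hu0
  have hc : 0 ≤ ωn.toReal ^ 2 / ωm.toReal ^ 2 := by positivity
  have hmul := mul_le_mul_of_nonneg_left hsup hc
  rw [mul_add] at hmul
  simp only [ge_iff_le, div_eq_mul_one_div (ωn.toReal ^ 2 / ωm.toReal ^ 2)]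
  linarith
end

section
/- For an ellipsoid ℰ = TB₂ⁿ with T positive definite, and any u ∈ S^{n-1}, one has |P_{u^⊥}ℰ|_{n-1} / (|ℰ| · ‖u‖_ℰ) = |B₂^{n-1}| / |B₂ⁿ|, where ‖u‖_ℰ = |T^{-1}u| is the Minkowski functional of ℰ. -/
open MeasureTheory

open scoped RealInnerProductSpace

set_option maxHeartbeats 1000000 in
open Module Submodule in
/-- For an ellipsoid `ℰ = TB₂ⁿ` (`T` positive definite) and `u ∈ Sⁿ⁻¹`:
`|P_{u⊥}ℰ|_{n-1} / (|ℰ| · ‖u‖_ℰ) = |B₂^{n-1}| / |B₂ⁿ|`, where `‖u‖_ℰ = |T⁻¹u|`. -/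
theorem ellipsoid_projection_formula (n : ℕ) (hn : 1 ≤ n)
    (T : Matrix (Fin n) (Fin n) ℝ) (hT : T.PosDef)
    (u : EuclideanSpace ℝ (Fin n)) (hu : ‖u‖ = 1)
    (E : Set (EuclideanSpace ℝ (Fin n)))
    (hE : E = (Matrix.toEuclideanLin T) '' Metric.closedBall 0 1) :
    (volume ((Submodule.orthogonalProjectionOnto ((Submodule.span ℝ {u})ᗮ)) '' E)).toReal /
        ((volume E).toReal * ‖Matrix.toEuclideanLin T⁻¹ u‖) =
      (volume (Metric.closedBall (0 : EuclideanSpace ℝ (Fin (n - 1))) 1)).toReal /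
        (volume (Metric.closedBall (0 : EuclideanSpace ℝ (Fin n)) 1)).toReal := by
  classical
  obtain ⟨m, rfl⟩ : ∃ m, n = m + 1 := ⟨n - 1, (Nat.succ_pred_eq_of_pos hn).symm⟩
  haveI : Fact (finrank ℝ (EuclideanSpace ℝ (Fin (m + 1))) = m + 1) :=
    ⟨finrank_euclideanSpace_fin⟩
  have hu0 : u ≠ 0 := by intro h; rw [h, norm_zero] at hu; norm_num at hu
  set L : EuclideanSpace ℝ (Fin (m + 1)) →ₗ[ℝ] EuclideanSpace ℝ (Fin (m + 1)) :=
    Matrix.toEuclideanLin T with hL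
  clear_value L
  have hdetL : LinearMap.det L = T.det := by
    rw [hL, Matrix.toEuclideanLin_eq_toLin, LinearMap.det_toLin]
  have hTdet : T.det ≠ 0 := ne_of_gt hT.det_pos
  set w₀ : EuclideanSpace ℝ (Fin (m + 1)) := Matrix.toEuclideanLin T⁻¹ u with hw₀def
  clear_value w₀
  have hLw₀ : L w₀ = u := by
    have h1 : T * T⁻¹ = 1 := Matrix.mul_nonsing_inv T (isUnit_iff_ne_zero.mpr hTdet)
    have h2 : L w₀ = Matrix.toEuclideanLin (T * T⁻¹) u := by
      rw [hL, hw₀def, Matrix.toEuclideanLin_eq_toLin,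
        Matrix.toLin_mul (PiLp.basisFun 2 ℝ (Fin (m+1))) (PiLp.basisFun 2 ℝ (Fin (m+1))) _ T T⁻¹]
      rfl
    rw [h2, h1, Matrix.toEuclideanLin_eq_toLin, Matrix.toLin_one]
    rfl
  have hw₀ : w₀ ≠ 0 := by
    intro h
    apply hu0
    rw [← hLw₀, h, map_zero]
  set r : ℝ := ‖w₀‖ with hrdef
  clear_value r
  have hr0 : 0 < r := by rw [hrdef]; exact norm_pos_iff.mpr hw₀
  obtain ⟨w, hwnorm, hLw, hwspan⟩ : ∃ w : EuclideanSpace ℝ (Fin (m + 1)), ‖w‖ = 1 ∧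
      L w = r⁻¹ • u ∧ span ℝ {w} = span ℝ {w₀} := by
    refine ⟨r⁻¹ • w₀, ?_, ?_, ?_⟩
    · rw [norm_smul, ← hrdef, Real.norm_eq_abs, abs_inv, abs_of_pos hr0,
        inv_mul_cancel₀ hr0.ne']
    · rw [LinearMap.map_smul, hLw₀]
    · rw [Submodule.span_singleton_smul_eq (by simpa using hr0.ne' : (r : ℝ)⁻¹ ≠ 0).isUnit]
  have hw0 : w ≠ 0 := by intro h; rw [h, norm_zero] at hwnorm; norm_num at hwnorm
  set W : Submodule ℝ (EuclideanSpace ℝ (Fin (m + 1))) := (span ℝ {u})ᗮ with hW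
  set W' : Submodule ℝ (EuclideanSpace ℝ (Fin (m + 1))) := (span ℝ {w})ᗮ with hW'
  set bW : OrthonormalBasis (Fin m) ℝ W := OrthonormalBasis.fromOrthogonalSpanSingleton m hu0
    with hbW
  set bW' : OrthonormalBasis (Fin m) ℝ W' := OrthonormalBasis.fromOrthogonalSpanSingleton m hw0
    with hbW'
  clear_value bW bW'
  clear hbW hbW'
  clear_value W W'
  set P := Submodule.orthogonalProjectionOnto W with hP
  clear_value P
  have hww : ⟪w, w⟫ = 1 := by
    rw [real_inner_self_eq_norm_mul_norm, hwnorm]; norm_num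
  -- the projection of `E` as an image of the `m`-ball
  have hPu : P u = 0 := by
    rw [hP, Submodule.orthogonalProjectionOnto_eq_zero_iff, hW, Submodule.orthogonal_orthogonal]
    exact Submodule.mem_span_singleton_self u
  have key : (⇑P '' E) = (fun x => P (L x)) '' (Metric.closedBall 0 1 ∩ (W' : Set _)) := by
    rw [hE, ← Set.image_comp]
    apply Set.Subset.antisymm
    · rintro _ ⟨x, hx, rfl⟩
      rw [Metric.mem_closedBall, dist_zero_right] at hx
      refine ⟨x - ⟪w, x⟫ • w, ⟨?_, ?_⟩, ?_⟩
      · rw [Metric.mem_closedBall, dist_zero_right]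
        have hinner : ⟪x - ⟪w, x⟫ • w, ⟪w, x⟫ • w⟫ = 0 := by
          rw [inner_sub_left, real_inner_smul_right, real_inner_smul_right,
            real_inner_smul_left, hww, real_inner_comm x w]
          ring
        have hx2 : ‖x‖ ^ 2 = ‖x - ⟪w, x⟫ • w‖ ^ 2 + ‖⟪w, x⟫ • w‖ ^ 2 := by
          have := norm_add_sq_real (x - ⟪w, x⟫ • w) (⟪w, x⟫ • w)
          rw [sub_add_cancel, hinner] at this
          linarith
        nlinarith [norm_nonneg (x - ⟪w, x⟫ • w), norm_nonneg (⟪w, x⟫ • w), norm_nonneg x]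
      · rw [SetLike.mem_coe, hW', Submodule.mem_orthogonal_singleton_iff_inner_right]
        rw [inner_sub_right, inner_smul_right, hww, mul_one, sub_self]
      · simp only [Function.comp_apply, map_sub, LinearMap.map_smul, hLw]
        rw [ContinuousLinearMap.map_smul, ContinuousLinearMap.map_smul, hPu,
          smul_zero, smul_zero, sub_zero]
    · exact Set.image_mono Set.inter_subset_left
  -- the unit ball of `W'` as an image of the Euclidean `m`-ball
  have himj : (fun x : EuclideanSpace ℝ (Fin m) =>
        ((bW'.repr.symm x : W') : EuclideanSpace ℝ (Fin (m + 1)))) '' Metric.closedBall 0 1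
      = Metric.closedBall 0 1 ∩ (W' : Set _) := by
    ext z
    constructor
    · rintro ⟨x, hx, rfl⟩
      rw [Metric.mem_closedBall, dist_zero_right] at hx
      refine ⟨?_, ?_⟩
      · rw [Metric.mem_closedBall, dist_zero_right]
        have : ‖((bW'.repr.symm x : W') : EuclideanSpace ℝ (Fin (m + 1)))‖
            = ‖bW'.repr.symm x‖ := rfl
        rw [this, LinearIsometryEquiv.norm_map]
        exact hx
      · exact (bW'.repr.symm x).2
    · rintro ⟨hz1, hz2⟩
      rw [Metric.mem_closedBall, dist_zero_right] at hz1
      refine ⟨bW'.repr ⟨z, hz2⟩, ?_, ?_⟩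
      · rw [Metric.mem_closedBall, dist_zero_right, LinearIsometryEquiv.norm_map]
        exact hz1
      · show ((bW'.repr.symm (bW'.repr ⟨z, hz2⟩) : W') : EuclideanSpace ℝ (Fin (m + 1))) = z
        rw [LinearIsometryEquiv.symm_apply_apply]
  -- the endomorphism of the Euclidean `m`-space representing the projection of the ellipsoid
  set Mlin : EuclideanSpace ℝ (Fin m) →ₗ[ℝ] EuclideanSpace ℝ (Fin m) :=
    bW.repr.toLinearMap ∘ₗ (P.toLinearMap ∘ₗ (L ∘ₗ (W'.subtype ∘ₗ bW'.repr.symm.toLinearMap)))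
    with hMlin
  have hMlinApply : ∀ x, Mlin x = bW.repr (P (L ((bW'.repr.symm x : W') :
      EuclideanSpace ℝ (Fin (m + 1))))) := fun x => rfl
  have hMIm : ⇑bW.repr '' (⇑P '' E) = ⇑Mlin '' Metric.closedBall 0 1 := by
    rw [key, ← himj, ← Set.image_comp, ← Set.image_comp]
    apply Set.image_congr
    intro x _
    exact (hMlinApply x).symm
  -- volume identities
  have hEcompact : IsCompact E := by
    rw [hE]; exact (isCompact_closedBall 0 1).image L.continuous_of_finiteDimensional
  have hPEmeas : MeasurableSet (⇑P '' E) :=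
    ((hEcompact.image P.continuous).isClosed).measurableSet
  have hvol1 : volume (⇑P '' E) = volume (⇑Mlin '' Metric.closedBall 0 1) := by
    rw [← hMIm]
    have h1 : ⇑bW.repr '' (⇑P '' E) = ⇑bW.repr.symm ⁻¹' (⇑P '' E) := by
      ext y
      constructor
      · rintro ⟨z, hz, rfl⟩
        simpa [LinearIsometryEquiv.symm_apply_apply] using hz
      · intro hy
        exact ⟨bW.repr.symm y, hy, by rw [LinearIsometryEquiv.apply_symm_apply]⟩
    rw [h1]
    exact (bW.repr.symm.measurePreserving.measure_preimage hPEmeas.nullMeasurableSet).symm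
  have hvol2 : volume (⇑Mlin '' Metric.closedBall 0 1)
      = ENNReal.ofReal |LinearMap.det Mlin|
        * volume (Metric.closedBall (0 : EuclideanSpace ℝ (Fin m)) 1) :=
    volume.addHaar_image_linearMap Mlin _
  have hvolE : volume E = ENNReal.ofReal |T.det|
      * volume (Metric.closedBall (0 : EuclideanSpace ℝ (Fin (m + 1))) 1) := by
    rw [hE, volume.addHaar_image_linearMap, hdetL]
  -- adapted orthonormal bases of the ambient space
  set Bv : Fin m ⊕ Fin 1 → EuclideanSpace ℝ (Fin (m + 1)) :=
    Sum.elim (fun i => ((bW' i : W') : EuclideanSpace ℝ (Fin (m + 1)))) (fun _ => w) with hBv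
  set Cv : Fin m ⊕ Fin 1 → EuclideanSpace ℝ (Fin (m + 1)) :=
    Sum.elim (fun i => ((bW i : W) : EuclideanSpace ℝ (Fin (m + 1)))) (fun _ => u) with hCv
  have hinnerW' : ∀ i, ⟪((bW' i : W') : EuclideanSpace ℝ (Fin (m + 1))), w⟫ = 0 := by
    intro i
    have h2 : ((bW' i : W') : EuclideanSpace ℝ (Fin (m + 1))) ∈ (span ℝ {w})ᗮ := by
      rw [← hW']; exact (bW' i).2
    exact (Submodule.mem_orthogonal_singleton_iff_inner_left).mp h2
  have hinnerW : ∀ i, ⟪((bW i : W) : EuclideanSpace ℝ (Fin (m + 1))), u⟫ = 0 := by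
    intro i
    have h2 : ((bW i : W) : EuclideanSpace ℝ (Fin (m + 1))) ∈ (span ℝ {u})ᗮ := by
      rw [← hW]; exact (bW i).2
    exact (Submodule.mem_orthogonal_singleton_iff_inner_left).mp h2
  have hBo : Orthonormal ℝ Bv := by
    constructor
    · rintro (i | i)
      · exact bW'.orthonormal.1 i
      · exact hwnorm
    · rintro (i | i) (j | j) hij
      · exact bW'.orthonormal.2 (by simpa using hij)
      · exact hinnerW' i
      · rw [real_inner_comm]; exact hinnerW' j
      · exact absurd (congrArg Sum.inr (Subsingleton.elim i j)) hij
  have hCo : Orthonormal ℝ Cv := by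
    constructor
    · rintro (i | i)
      · exact bW.orthonormal.1 i
      · rw [hCv]; simpa using hu
    · rintro (i | i) (j | j) hij
      · exact bW.orthonormal.2 (by simpa using hij)
      · exact hinnerW i
      · rw [real_inner_comm]; exact hinnerW j
      · exact absurd (congrArg Sum.inr (Subsingleton.elim i j)) hij
  have hcard : Fintype.card (Fin m ⊕ Fin 1) = finrank ℝ (EuclideanSpace ℝ (Fin (m + 1))) := by
    simp [finrank_euclideanSpace]
  set Bb : Basis (Fin m ⊕ Fin 1) ℝ (EuclideanSpace ℝ (Fin (m + 1))) :=
    basisOfLinearIndependentOfCardEqFinrank hBo.linearIndependent hcard with hBb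
  have hBbv : ⇑Bb = Bv := coe_basisOfLinearIndependentOfCardEqFinrank _ _
  set Cb : Basis (Fin m ⊕ Fin 1) ℝ (EuclideanSpace ℝ (Fin (m + 1))) :=
    basisOfLinearIndependentOfCardEqFinrank hCo.linearIndependent hcard with hCb
  have hCbv : ⇑Cb = Cv := coe_basisOfLinearIndependentOfCardEqFinrank _ _
  have hBo' : Orthonormal ℝ ⇑Bb := by rw [hBbv]; exact hBo
  have hCo' : Orthonormal ℝ ⇑Cb := by rw [hCbv]; exact hCo
  set N : Matrix (Fin m ⊕ Fin 1) (Fin m ⊕ Fin 1) ℝ := LinearMap.toMatrix Bb Cb L with hN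
  -- `|det N| = |det T|`
  have hdet1 : |N.det| = |T.det| := by
    have h1 : LinearMap.toMatrix Bb Bb L = LinearMap.toMatrix Cb Bb LinearMap.id * N := by
      rw [hN, ← LinearMap.toMatrix_comp Bb Cb Bb, LinearMap.id_comp]
    have h2 : (LinearMap.toMatrix Bb Bb L).det = LinearMap.det L :=
      LinearMap.det_toMatrix Bb L
    have h3 : |(LinearMap.toMatrix Cb Bb LinearMap.id).det| = 1 := by
      rw [LinearMap.toMatrix_id_eq_basis_toMatrix, ← Basis.det_apply]
      have e1 : Bb = (Bb.toOrthonormalBasis hBo').toBasis :=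
        (Basis.toBasis_toOrthonormalBasis _ _).symm
      have e2 : ⇑Cb = ⇑(Cb.toOrthonormalBasis hCo') :=
        (Basis.coe_toOrthonormalBasis _ _).symm
      rw [e2]
      conv_lhs => rw [e1]
      rw [← Real.norm_eq_abs]
      exact OrthonormalBasis.det_to_matrix_orthonormalBasis _ _
    have h4 : |LinearMap.det L| = |N.det| := by
      rw [← h2, h1, Matrix.det_mul, abs_mul, h3, one_mul]
    rw [← h4, hdetL]
  -- entries of `N`
  have hNe : ∀ p q, N p q = ⟪Cv p, L (Bv q)⟫ := by
    intro p q
    rw [hN, LinearMap.toMatrix_apply]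
    have e1 : Cb.repr (L (Bb q)) p = (Cb.toOrthonormalBasis hCo').repr (L (Bb q)) p := by
      conv_lhs => rw [← Basis.toBasis_toOrthonormalBasis Cb hCo']
      rw [OrthonormalBasis.coe_toBasis_repr_apply]
    rw [e1, OrthonormalBasis.repr_apply_apply, Basis.coe_toOrthonormalBasis, hCbv, hBbv]
  have hb12 : N.toBlocks₁₂ = 0 := by
    ext i j
    show N (Sum.inl i) (Sum.inr j) = 0
    rw [hNe]
    show ⟪((bW i : W) : EuclideanSpace ℝ (Fin (m + 1))), L w⟫ = 0
    rw [hLw, real_inner_smul_right, hinnerW i, mul_zero]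
  have hdet22 : N.toBlocks₂₂.det = r⁻¹ := by
    rw [Matrix.det_fin_one]
    show N (Sum.inr 0) (Sum.inr 0) = r⁻¹
    rw [hNe]
    show ⟪u, L w⟫ = r⁻¹
    rw [hLw, real_inner_smul_right, real_inner_self_eq_norm_mul_norm, hu]
    norm_num
  -- the top-left block is the matrix of `Mlin`
  have hproj : ∀ (z : EuclideanSpace ℝ (Fin (m + 1))) (i : Fin m),
      ⟪((bW i : W) : EuclideanSpace ℝ (Fin (m + 1))),
        ((P z : W) : EuclideanSpace ℝ (Fin (m + 1)))⟫
      = ⟪((bW i : W) : EuclideanSpace ℝ (Fin (m + 1))), z⟫ := by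
    intro z i
    have hsub : z - ((P z : W) : EuclideanSpace ℝ (Fin (m + 1))) ∈ Wᗮ := by
      rw [hP]; exact Submodule.sub_starProjection_mem_orthogonal z
    have h0 : ⟪((bW i : W) : EuclideanSpace ℝ (Fin (m + 1))),
        z - ((P z : W) : EuclideanSpace ℝ (Fin (m + 1)))⟫ = 0 :=
      Submodule.inner_right_of_mem_orthogonal (bW i).2 hsub
    rw [inner_sub_right] at h0
    linarith
  set eb : Basis (Fin m) ℝ (EuclideanSpace ℝ (Fin m)) :=
    (EuclideanSpace.basisFun (Fin m) ℝ).toBasis with heb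
  have hb11 : N.toBlocks₁₁ = LinearMap.toMatrix eb eb Mlin := by
    ext i j
    show N (Sum.inl i) (Sum.inl j) = _
    rw [hNe, LinearMap.toMatrix_apply]
    have e0 : eb j = EuclideanSpace.single j 1 := by
      rw [heb, OrthonormalBasis.coe_toBasis, EuclideanSpace.basisFun_apply]
    have e1 : eb.repr (Mlin (eb j)) i = Mlin (eb j) i := by
      rw [heb, OrthonormalBasis.coe_toBasis_repr_apply, EuclideanSpace.basisFun_repr]
    rw [e1, e0, hMlinApply, OrthonormalBasis.repr_symm_single,
      OrthonormalBasis.repr_apply_apply, Submodule.coe_inner, hproj]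
    show ⟪Cv (Sum.inl i), L (Bv (Sum.inl j))⟫ = _
    rw [hBv, hCv]
    simp
  -- putting things together: `|det Mlin| = |det T| * r`
  have hdetM : |LinearMap.det Mlin| = |T.det| * r := by
    have h4 : N.det = N.toBlocks₁₁.det * N.toBlocks₂₂.det := by
      conv_lhs => rw [← Matrix.fromBlocks_toBlocks N, hb12]
      rw [Matrix.det_fromBlocks_zero₁₂]
    have h5 : LinearMap.det Mlin = N.toBlocks₁₁.det := by
      rw [hb11, LinearMap.det_toMatrix]
    have h6 : |N.det| = |LinearMap.det Mlin| * r⁻¹ := by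
      rw [h4, ← h5, abs_mul, hdet22, abs_of_pos (inv_pos.mpr hr0)]
    rw [hdet1] at h6
    field_simp at h6
    linarith [abs_nonneg (LinearMap.det Mlin), abs_nonneg T.det]
  -- final computation
  subst hW
  subst hP
  rw [hvol1, hvol2, hvolE, ENNReal.toReal_mul, ENNReal.toReal_mul,
    ENNReal.toReal_ofReal (abs_nonneg _), ENNReal.toReal_ofReal (abs_nonneg _), hdetM]
  set ωm := (volume (Metric.closedBall (0 : EuclideanSpace ℝ (Fin m)) 1)).toReal
  set ωn := (volume (Metric.closedBall (0 : EuclideanSpace ℝ (Fin (m + 1))) 1)).toReal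
  have hne : |T.det| * r ≠ 0 :=
    mul_ne_zero (abs_ne_zero.mpr hTdet) hr0.ne'
  rw [show |T.det| * r * ωm = (|T.det| * r) * ωm from by ring,
    show |T.det| * ωn * r = (|T.det| * r) * ωn from by ring,
    mul_div_mul_left _ _ hne]
end
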